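/- arXiv:2107.07202 — 5 statements merged into one kernel-verified Lean document; each statement's English description precedes it below -/
import Mathlib

section
/- Assume kG is finite dimensional and semisimple. Let M be a finite dimensional H-module such that every composition factor of M is isomorphic to V_i for some i ∈ I (i.e., is x-torsion). Then xM = rad(M) (the Jacobson radical of M) and M^x = soc(M) (the socle of M). -/
open scoped TensorProduct

namespace HopfOrePaper

/-- A representation of `G` on `V` is simple (irreducible): `V ≠ 0` and the only
`G`-stable subspaces are `0` and `V`. -/
def IsSimpleRep {k G V : Type} [Field k] [Group G] [AddCommGroup V] [Module k V]
    (ρ : Representation k G V) : Prop :=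
  Nontrivial V ∧ ∀ p : Submodule k V, (∀ g : G, ∀ v ∈ p, ρ g v ∈ p) → p = ⊥ ∨ p = ⊤

/-- Isomorphism of representations. -/
def RepIso {k G V V' : Type} [Field k] [Group G] [AddCommGroup V] [Module k V]
    [AddCommGroup V'] [Module k V'] (ρ : Representation k G V)
    (ρ' : Representation k G V') : Prop :=
  ∃ f : V ≃ₗ[k] V', ∀ (g : G) (v : V), f (ρ g v) = ρ' g (f v)

/-- `IsTwistIso χ t ρ ρ'` says that `ρ' ≅ V_{χ^t} ⊗ ρ` as representations of `G`. -/
def IsTwistIso {k G V V' : Type} [Field k] [Group G] [AddCommGroup V] [Module k V]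
    [AddCommGroup V'] [Module k V'] (χ : G →* kˣ) (t : ℤ)
    (ρ : Representation k G V) (ρ' : Representation k G V') : Prop :=
  ∃ f : V ≃ₗ[k] V', ∀ (g : G) (v : V), ρ' g (f v) = ((χ g ^ t : kˣ) : k) • f (ρ g v)

/-- `ρ` and `ρ'` lie in the same class of the equivalence `∼` on simple modules,
i.e. `ρ' ≅ V_{χ^t} ⊗ ρ` for some `t ∈ ℤ` (i.e. `[i] = [j]`). -/
def TwistEquiv {k G V V' : Type} [Field k] [Group G] [AddCommGroup V] [Module k V]
    [AddCommGroup V'] [Module k V'] (χ : G →* kˣ)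
    (ρ : Representation k G V) (ρ' : Representation k G V') : Prop :=
  ∃ t : ℤ, IsTwistIso χ t ρ ρ'

/-- A presentation of the Hopf–Ore extension `H = kG(χ⁻¹, a, 0)`:
`H` is a `k`-algebra containing the group algebra `kG` and an element `x` with
`x·g = χ⁻¹(g)·g·x`, and with `k`-basis `{g xⁱ | g ∈ G, i ∈ ℕ}`. -/
structure HopfOre (k G H : Type) [Field k] [Group G] [Ring H] [Algebra k H]
    (χ : G →* kˣ) : Type where
  emb : MonoidAlgebra k G →ₐ[k] H
  x : H
  comm_rel : ∀ g : G, x * emb (MonoidAlgebra.of k G g)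
      = (((χ g)⁻¹ : kˣ) : k) • (emb (MonoidAlgebra.of k G g) * x)
  basis_li : LinearIndependent k fun p : G × ℕ => emb (MonoidAlgebra.of k G p.1) * x ^ p.2
  basis_span :
    Submodule.span k (Set.range fun p : G × ℕ => emb (MonoidAlgebra.of k G p.1) * x ^ p.2) = ⊤

variable {k G H : Type} [Field k] [Group G] [Ring H] [Algebra k H] {χ : G →* kˣ}

/-- `IsStdQuot HO ρ e c d` says that the `H`-module `W` is (a copy of) the quotient module
`M(V)/cM(V)` of `M(V) = H ⊗_{kG} V`, where `c` is a (central) polynomial in `x` of degree `d`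
(of the form `x^t` or `(x^s - β)^r`): `e` is a `kG`-equivariant embedding of `V` into `W`,
`c` annihilates `W`, and `W = ⊕_{j=0}^{d-1} xʲ·e(V)`. -/
structure IsStdQuot (HO : HopfOre k G H χ) {V W : Type}
    [AddCommGroup V] [Module k V]
    [AddCommGroup W] [Module k W] [Module H W] [IsScalarTower k H W]
    (ρ : Representation k G V) (e : V →ₗ[k] W) (c : H) (d : ℕ) : Prop where
  equivariant : ∀ (g : G) (v : V), e (ρ g v) = HO.emb (MonoidAlgebra.of k G g) • e v
  ann : ∀ w : W, c • w = 0
  xbasis : Function.Bijective fun f : Fin d → V => ∑ j : Fin d, HO.x ^ (j : ℕ) • e (f j)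

/-- A witness exhibiting the `H`-module `W` as a standard quotient module
`M(V_i)/cM(V_i)` for some finite-dimensional simple `kG`-module `V_i`. -/
structure StdWitness (HO : HopfOre k G H χ) (W : Type)
    [AddCommGroup W] [Module k W] [Module H W] [IsScalarTower k H W]
    (c : H) (d : ℕ) : Type 1 where
  V : Type
  [acg : AddCommGroup V]
  [modk : Module k V]
  ρ : Representation k G V
  fin : FiniteDimensional k V
  simple : IsSimpleRep ρ
  e : V →ₗ[k] W
  std : IsStdQuot HO ρ e c d

/-- The representation of `G` obtained from an `H`-module by restriction along
`kG → H`. -/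
noncomputable def resRep (HO : HopfOre k G H χ) (M : Type) [AddCommGroup M] [Module k M]
    [Module H M] [IsScalarTower k H M] : Representation k G M where
  toFun g :=
    { toFun := fun m => HO.emb (MonoidAlgebra.of k G g) • m
      map_add' := fun m n => smul_add _ m n
      map_smul' := fun c m => by
        simp only [RingHom.id_apply]
        exact (smul_comm c (HO.emb (MonoidAlgebra.of k G g)) m).symm }
  map_one' := by
    ext m
    simp only [LinearMap.coe_mk, AddHom.coe_mk, LinearMap.id_coe, id_eq, Module.End.one_apply]
    rw [map_one, map_one, one_smul]
  map_mul' g h := by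
    ext m
    simp only [LinearMap.coe_mk, AddHom.coe_mk, Module.End.mul_apply]
    rw [map_mul, map_mul, mul_smul]

/-- A module over a ring is indecomposable. -/
def IsIndecomposableMod (R M : Type) [Ring R] [AddCommGroup M] [Module R M] : Prop :=
  Nontrivial M ∧ ∀ p q : Submodule R M, IsCompl p q → p = ⊥ ∨ q = ⊥

/-- A module is uniserial if its submodules form a chain. -/
def IsUniserial (R M : Type) [Ring R] [AddCommGroup M] [Module R M] : Prop :=
  ∀ p q : Submodule R M, p ≤ q ∨ q ≤ p

/-- The radical of a module: the intersection of its maximal submodules. -/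
def modRadical (R M : Type) [Ring R] [AddCommGroup M] [Module R M] : Submodule R M :=
  sInf {p : Submodule R M | IsCoatom p}

/-- The socle of a module: the sum of its simple submodules. -/
def modSocle (R M : Type) [Ring R] [AddCommGroup M] [Module R M] : Submodule R M :=
  sSup {p : Submodule R M | IsAtom p}

/-- The radical series `M ⊇ rad M ⊇ rad² M ⊇ ⋯` of a module. -/
noncomputable def radIter (R M : Type) [Ring R] [AddCommGroup M] [Module R M] :
    ℕ → Submodule R M
  | 0 => ⊤
  | j + 1 => Submodule.map (radIter R M j).subtype (modRadical R (radIter R M j))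

/-- The submodule `c•M` of a module `M` (for `c` a central, or normalizing, element). -/
def smulRange {M : Type} (R : Type) [Ring R] [AddCommGroup M] [Module R M] (c : R) :
    Submodule R M :=
  Submodule.span R (Set.range fun m : M => c • m)

/-- The subquotient `q/p` associated with submodules `p ≤ q`. -/
abbrev sectionQuot {R M : Type} [Ring R] [AddCommGroup M] [Module R M]
    (p q : Submodule R M) :=
  ↥q ⧸ (Submodule.comap q.subtype p)

/-- The hypothesis that a given `H`-module structure on `M ⊗[k] N` is the one obtained
from the `H`-module structures of `M` and `N` via the comultiplication of
`H = kG(χ⁻¹,a,0)`, i.e. `Δ(g) = g ⊗ g` and `Δ(x) = x ⊗ a + 1 ⊗ x`. -/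
structure TensorAct (HO : HopfOre k G H χ) (a : G) (M N : Type)
    [AddCommGroup M] [Module k M] [Module H M] [IsScalarTower k H M]
    [AddCommGroup N] [Module k N] [Module H N] [IsScalarTower k H N]
    [Module H (M ⊗[k] N)] [IsScalarTower k H (M ⊗[k] N)] : Prop where
  g_tmul : ∀ (g : G) (m : M) (n : N),
    HO.emb (MonoidAlgebra.of k G g) • (m ⊗ₜ[k] n)
      = (HO.emb (MonoidAlgebra.of k G g) • m) ⊗ₜ[k] (HO.emb (MonoidAlgebra.of k G g) • n)
  x_tmul : ∀ (m : M) (n : N),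
    HO.x • (m ⊗ₜ[k] n)
      = (HO.x • m) ⊗ₜ[k] (HO.emb (MonoidAlgebra.of k G a) • n) + m ⊗ₜ[k] (HO.x • n)

/-- The twist of a representation by the `t`-th power of a character: this is the
representation `V_{χ^t} ⊗ ρ`, realized on the same space (`σ^t` applied to `ρ`). -/
def twistRep {k G V : Type} [Field k] [Group G] [AddCommGroup V] [Module k V]
    (χ : G →* kˣ) (t : ℤ) (ρ : Representation k G V) : Representation k G V where
  toFun g := ((χ g ^ t : kˣ) : k) • ρ g
  map_one' := by simp
  map_mul' g h := by
    ext v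
    simp only [map_mul, mul_zpow, Units.val_mul, LinearMap.smul_apply, Module.End.mul_apply,
      map_smul, smul_smul, mul_comm]

/-- The one-dimensional representation attached to a linear character. -/
def charRep (k : Type) {G : Type} [Field k] [Group G] (μ : G →* kˣ) :
    Representation k G k where
  toFun g := ((μ g : k) • LinearMap.id)
  map_one' := by
    simp only [map_one, Units.val_one, one_smul]
    rfl
  map_mul' g h := by
    ext
    simp [mul_smul, mul_comm]

/-- `SubRepIso ρT p ρ` : `p` is a `G`-stable subspace of the representation `ρT`
and, as a representation of `G`, it is isomorphic to `ρ`. -/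
def SubRepIso {k G X V : Type} [Field k] [Group G] [AddCommGroup X] [Module k X]
    [AddCommGroup V] [Module k V]
    (ρT : Representation k G X) (p : Submodule k X) (ρ : Representation k G V) : Prop :=
  (∀ g : G, ∀ y ∈ p, ρT g y ∈ p) ∧
  ∃ f : V ≃ₗ[k] ↥p, ∀ (g : G) (v : V), (f (ρ g v) : X) = ρT g (f v)



section Aux
variable {k G H : Type} [Field k] [Group G] [Ring H] [Algebra k H] {χ : G →* kˣ}

lemma aux_smul_comm {N : Type} [AddCommGroup N] [Module k N] [Module H N]
    [IsScalarTower k H N] (a : k) (h : H) (n : N) : h • (a • n) = a • (h • n) := by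
  rw [← algebraMap_smul H a n, ← mul_smul, ← Algebra.commutes, mul_smul, algebraMap_smul]

lemma aux_xsmul_mem (HO : HopfOre k G H χ) {N : Type} [AddCommGroup N] [Module k N]
    [Module H N] [IsScalarTower k H N] (p : Submodule H N) (h : H) (n : N)
    (hn : HO.x • n ∈ p) : HO.x • (h • n) ∈ p := by
  have hh : h ∈ Submodule.span k (Set.range fun q : G × ℕ =>
      HO.emb (MonoidAlgebra.of k G q.1) * HO.x ^ q.2) := by
    rw [HO.basis_span]; trivial
  induction hh using Submodule.span_induction with
  | mem h hmem =>
      obtain ⟨⟨g, i⟩, rfl⟩ := hmem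
      have key : HO.x * (HO.emb (MonoidAlgebra.of k G g) * HO.x ^ i)
          = (((χ g)⁻¹ : kˣ) : k) • ((HO.emb (MonoidAlgebra.of k G g) * HO.x ^ i) * HO.x) := by
        rw [← mul_assoc, HO.comm_rel g, smul_mul_assoc, mul_assoc, ← pow_succ',
          mul_assoc, ← pow_succ]
      rw [← mul_smul, key, smul_assoc, mul_smul]
      exact p.smul_of_tower_mem _ (p.smul_mem _ hn)
  | zero => rw [zero_smul, smul_zero]; exact p.zero_mem
  | add a b ha hb iha ihb => rw [add_smul, smul_add]; exact p.add_mem iha ihb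
  | smul a h' hh' ih =>
      rw [smul_assoc, aux_smul_comm]
      exact p.smul_of_tower_mem a ih

lemma aux_hsmul_mem (HO : HopfOre k G H χ) {N : Type} [AddCommGroup N] [Module k N]
    [Module H N] [IsScalarTower k H N] (hx0 : ∀ n : N, HO.x • n = 0) (s : Set N)
    (h0 : (0 : N) ∈ s) (hadd : ∀ a b, a ∈ s → b ∈ s → a + b ∈ s)
    (hk : ∀ (a : k), ∀ n ∈ s, a • n ∈ s)
    (hG : ∀ g : G, ∀ n ∈ s, HO.emb (MonoidAlgebra.of k G g) • n ∈ s)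
    (h : H) (n : N) (hn : n ∈ s) : h • n ∈ s := by
  have hh : h ∈ Submodule.span k (Set.range fun q : G × ℕ =>
      HO.emb (MonoidAlgebra.of k G q.1) * HO.x ^ q.2) := by
    rw [HO.basis_span]; trivial
  induction hh using Submodule.span_induction with
  | mem h hmem =>
      obtain ⟨⟨g, i⟩, rfl⟩ := hmem
      cases i with
      | zero =>
          show (HO.emb (MonoidAlgebra.of k G g) * HO.x ^ 0) • n ∈ s
          rw [pow_zero, mul_one]; exact hG g n hn
      | succ j =>
          show (HO.emb (MonoidAlgebra.of k G g) * HO.x ^ (j + 1)) • n ∈ s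
          rw [pow_succ, ← mul_assoc, mul_smul, hx0, smul_zero]; exact h0
  | zero => rw [zero_smul]; exact h0
  | add a b ha hb iha ihb => rw [add_smul]; exact hadd _ _ iha ihb
  | smul a h' hh' ih => rw [smul_assoc]; exact hk a _ ih


lemma aux_nilp (HO : HopfOre k G H χ) (M : Type) [AddCommGroup M] [Module k M] [Module H M]
    [IsScalarTower k H M]
    (hcf : ∃ cs : CompositionSeries (Submodule H M), cs 0 = ⊥ ∧ cs (Fin.last cs.length) = ⊤ ∧
      ∀ j : Fin cs.length, ∀ m ∈ cs j.succ, HO.x • m ∈ cs j.castSucc) :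
    ∃ n : ℕ, ∀ m : M, HO.x ^ n • m = 0 := by
  obtain ⟨cs, hbot, hlast, hstep⟩ := hcf
  have key : ∀ i : ℕ, ∀ hi : i < cs.length + 1, ∀ m ∈ cs ⟨i, hi⟩, HO.x ^ i • m = 0 := by
    intro i
    induction i with
    | zero =>
      intro hi m hm
      have h0 : (⟨0, hi⟩ : Fin (cs.length + 1)) = 0 := by
        apply Fin.ext; simp
      rw [h0, hbot] at hm
      rw [pow_zero, one_smul]
      simpa using hm
    | succ i ih =>
      intro hi m hm
      have hij : i < cs.length := by omega
      have hsucc : (⟨i, hij⟩ : Fin cs.length).succ = ⟨i + 1, hi⟩ := by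
        apply Fin.ext; simp
      have hcast : (⟨i, hij⟩ : Fin cs.length).castSucc = ⟨i, by omega⟩ := by
        apply Fin.ext; simp
      have hx : HO.x • m ∈ cs ⟨i, by omega⟩ := by
        rw [← hcast]
        exact hstep ⟨i, hij⟩ m (by rw [hsucc]; exact hm)
      rw [pow_succ, mul_smul]
      exact ih _ _ hx
  refine ⟨cs.length, fun m => key cs.length (Nat.lt_succ_self _) m ?_⟩
  have : (⟨cs.length, Nat.lt_succ_self _⟩ : Fin (cs.length + 1)) = Fin.last cs.length := rfl
  rw [this, hlast]
  trivial

/-- Build an `H`-submodule from a `kG`-submodule of a module killed by `x`. -/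
def auxToH (HO : HopfOre k G H χ) {N : Type} [AddCommGroup N] [Module k N]
    [Module H N] [IsScalarTower k H N] [Module (MonoidAlgebra k G) N]
    (hcomp : ∀ (c : MonoidAlgebra k G) (n : N), c • n = HO.emb c • n)
    (hx0 : ∀ n : N, HO.x • n = 0) (p : Submodule (MonoidAlgebra k G) N) :
    Submodule H N where
  carrier := p
  add_mem' := fun ha hb => p.add_mem ha hb
  zero_mem' := p.zero_mem
  smul_mem' := fun h n hn =>
    aux_hsmul_mem HO hx0 p p.zero_mem (fun _ _ ha hb => p.add_mem ha hb)
      (fun a n hn => by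
        have h1 := p.smul_mem (algebraMap k (MonoidAlgebra k G) a) hn
        rwa [hcomp, AlgHom.commutes, algebraMap_smul] at h1)
      (fun g n hn => by
        rw [← hcomp]; exact p.smul_mem _ hn) h n hn

/-- Build a `kG`-submodule from an `H`-submodule. -/
def auxToG (HO : HopfOre k G H χ) {N : Type} [AddCommGroup N] [Module k N]
    [Module H N] [IsScalarTower k H N] [Module (MonoidAlgebra k G) N]
    (hcomp : ∀ (c : MonoidAlgebra k G) (n : N), c • n = HO.emb c • n)
    (q : Submodule H N) : Submodule (MonoidAlgebra k G) N where
  carrier := q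
  add_mem' := fun ha hb => q.add_mem ha hb
  zero_mem' := q.zero_mem
  smul_mem' := fun c n hn => by rw [hcomp]; exact q.smul_mem _ hn

end Aux

/-- **Lemma 4.5.** Assume `kG` is finite-dimensional and semisimple.  Let `M` be a
finite-dimensional `H`-module each of whose composition factors is `x`-torsion
(i.e. isomorphic to some `V_i`).  Then `xM = rad(M)` and `M^x = soc(M)`. -/
theorem stmt_8 {k G H : Type} [Field k] [IsAlgClosed k] [Group G] [Finite G]
    [Ring H] [Algebra k H]
    {χ : G →* kˣ} (a : G) (ha : a ∈ Subgroup.center G) (hχa : χ a ≠ 1)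
    (hss : IsSemisimpleRing (MonoidAlgebra k G))
    (HO : HopfOre k G H χ)
    (M : Type) [AddCommGroup M] [Module k M] [Module H M] [IsScalarTower k H M]
    [FiniteDimensional k M]
    (hcf : ∃ cs : CompositionSeries (Submodule H M),
      cs 0 = ⊥ ∧ cs (Fin.last cs.length) = ⊤ ∧
      ∀ j : Fin cs.length, ∀ m ∈ cs j.succ, HO.x • m ∈ cs j.castSucc) :
    smulRange (M := M) H HO.x = modRadical H M ∧
    (∀ m : M, HO.x • m = 0 ↔ m ∈ modSocle H M) := by
  classical
  haveI := hss
  obtain ⟨n, hn⟩ := aux_nilp HO M hcf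
  set Q : Submodule H M := smulRange (M := M) H HO.x with hQdef
  have hxQ : ∀ m : M, HO.x • m ∈ Q := fun m => Submodule.subset_span ⟨m, rfl⟩
  -- the submodule M^x
  let Mx : Submodule H M :=
    { carrier := {m | HO.x • m = 0}
      add_mem' := fun {a' b'} ha' hb' => by
        simp only [Set.mem_setOf_eq] at *
        rw [smul_add, ha', hb', add_zero]
      zero_mem' := smul_zero _
      smul_mem' := fun h m hm => by
        have h1 : HO.x • m ∈ (⊥ : Submodule H M) := by simpa using hm
        have h2 := aux_xsmul_mem HO (⊥ : Submodule H M) h m h1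
        simpa using h2 }
  -- Part 1, ≤ : xM ⊆ rad M
  have hQle : Q ≤ modRadical H M := by
    rw [hQdef]
    refine Submodule.span_le.mpr ?_
    rintro _ ⟨m, rfl⟩
    refine Submodule.mem_sInf.mpr fun p hp => ?_
    let p' : Submodule H M :=
      { carrier := {m' | HO.x • m' ∈ p}
        add_mem' := fun {a' b'} ha' hb' => by
          simp only [Set.mem_setOf_eq] at *
          rw [smul_add]; exact p.add_mem ha' hb'
        zero_mem' := by simp only [Set.mem_setOf_eq, smul_zero]; exact p.zero_mem
        smul_mem' := fun h m' hm' => aux_xsmul_mem HO p h m' hm' }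
    have hpp' : p ≤ p' := fun m' hm' => p.smul_mem _ hm'
    rcases eq_or_ne p' ⊤ with htop | hne
    · have : m ∈ p' := htop ▸ trivial
      exact this
    · exfalso
      have hpe : p' = p := by
        rcases lt_or_eq_of_le hpp' with hlt | he
        · exact absurd (hp.2 _ hlt) hne
        · exact he.symm
      have hall : ∀ i : ℕ, ∀ m' : M, HO.x ^ i • m' ∈ p → m' ∈ p := by
        intro i
        induction i with
        | zero => intro m' hm'; rwa [pow_zero, one_smul] at hm'
        | succ i ih =>
          intro m' hm'
          rw [pow_succ, mul_smul] at hm'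
          have h1 : HO.x • m' ∈ p := ih _ hm'
          have h2 : m' ∈ p' := h1
          rwa [hpe] at h2
      have : ∀ m' : M, m' ∈ p := fun m' => hall n m' (by rw [hn m']; exact p.zero_mem)
      exact hp.1 (eq_top_iff.mpr fun m' _ => this m')
  -- Part 1, ≥ : rad M ⊆ xM
  have hradQ : modRadical H M ≤ Q := by
    intro m hm
    letI : Module (MonoidAlgebra k G) (M ⧸ Q) := Module.compHom _ HO.emb.toRingHom
    have hcomp : ∀ (c : MonoidAlgebra k G) (nn : M ⧸ Q), c • nn = HO.emb c • nn :=
      fun _ _ => rfl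
    have hx0 : ∀ nn : M ⧸ Q, HO.x • nn = 0 := by
      intro nn
      obtain ⟨m', rfl⟩ := Submodule.Quotient.mk_surjective Q nn
      rw [← Submodule.Quotient.mk_smul]
      exact (Submodule.Quotient.mk_eq_zero Q).mpr (hxQ m')
    have hjac : sInf {p : Submodule (MonoidAlgebra k G) (M ⧸ Q) | IsCoatom p} = ⊥ := by
      by_contra hne
      obtain ⟨c, hc⟩ := exists_isCompl
        (sInf {p : Submodule (MonoidAlgebra k G) (M ⧸ Q) | IsCoatom p})
      have hcne : c ≠ ⊤ := by
        rintro rfl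
        have := hc.disjoint
        rw [disjoint_top] at this
        exact hne this
      rcases eq_top_or_exists_le_coatom c with h | ⟨p, hp, hcp⟩
      · exact hcne h
      · have h1 : sInf {p : Submodule (MonoidAlgebra k G) (M ⧸ Q) | IsCoatom p} ≤ p :=
          sInf_le hp
        have h2 : (⊤ : Submodule (MonoidAlgebra k G) (M ⧸ Q)) ≤ p := by
          rw [← hc.sup_eq_top]; exact sup_le h1 hcp
        exact hp.1 (top_le_iff.mp h2)
    have key : ∀ c : Submodule (MonoidAlgebra k G) (M ⧸ Q), IsCoatom c →
        (Submodule.Quotient.mk m : M ⧸ Q) ∈ c := by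
      intro c hc
      let cH : Submodule H (M ⧸ Q) := auxToH HO hcomp hx0 c
      let P : Submodule H M := Submodule.comap Q.mkQ cH
      have hQP : Q ≤ P := by
        intro y hy
        show Q.mkQ y ∈ cH
        have : Q.mkQ y = 0 := (Submodule.Quotient.mk_eq_zero Q).mpr hy
        rw [this]; exact cH.zero_mem
      have hPco : IsCoatom P := by
        constructor
        · intro htop
          obtain ⟨nn, hnn⟩ : ∃ nn : M ⧸ Q, nn ∉ c := by
            by_contra hallc
            push_neg at hallc
            exact hc.1 (eq_top_iff.mpr fun y _ => hallc y)
          obtain ⟨m', rfl⟩ := Submodule.Quotient.mk_surjective Q nn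
          have : m' ∈ P := htop ▸ trivial
          exact hnn this
        · intro q hq
          obtain ⟨a', ha'q, ha'P⟩ : ∃ a', a' ∈ q ∧ a' ∉ P := by
            by_contra hcon
            push_neg at hcon
            exact lt_irrefl _ (lt_of_lt_of_le hq hcon)
          let qG : Submodule (MonoidAlgebra k G) (M ⧸ Q) :=
            auxToG HO hcomp (Submodule.map Q.mkQ q)
          have hcq : c ≤ qG := by
            intro nn hnn
            have h1 : Submodule.map Q.mkQ P ≤ Submodule.map Q.mkQ q :=
              Submodule.map_mono hq.le
            have h2 : nn ∈ Submodule.map Q.mkQ P := by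
              rw [Submodule.map_comap_eq_of_surjective (Submodule.Quotient.mk_surjective Q)]
              exact hnn
            exact h1 h2
          have hcne : c ≠ qG := by
            intro he
            apply ha'P
            have h1 : Q.mkQ a' ∈ Submodule.map Q.mkQ q := ⟨a', ha'q, rfl⟩
            have h2 : Q.mkQ a' ∈ c := by rw [he]; exact h1
            exact h2
          have hqtop : qG = ⊤ := hc.2 qG (lt_of_le_of_ne hcq hcne)
          have hmap : Submodule.map Q.mkQ q = ⊤ := by
            rw [eq_top_iff]
            intro nn _
            have : nn ∈ qG := hqtop ▸ trivial
            exact this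
          have hcm := Submodule.comap_map_eq Q.mkQ q
          rw [hmap, Submodule.comap_top, Submodule.ker_mkQ] at hcm
          have hQq : Q ≤ q := le_trans hQP hq.le
          rw [sup_eq_left.mpr hQq] at hcm
          exact hcm.symm
      have : m ∈ P := Submodule.mem_sInf.mp hm P hPco
      exact this
    have hmem : (Submodule.Quotient.mk m : M ⧸ Q) ∈
        (⊥ : Submodule (MonoidAlgebra k G) (M ⧸ Q)) := by
      rw [← hjac]
      exact Submodule.mem_sInf.mpr key
    exact (Submodule.Quotient.mk_eq_zero Q).mp hmem
  -- Part 2, soc ⊆ M^x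
  have hsocMx : modSocle H M ≤ Mx := by
    refine sSup_le fun p hp => ?_
    rcases eq_or_ne (p ⊓ Mx) p with he | hne
    · rw [← he]; exact inf_le_right
    · exfalso
      have hbot : p ⊓ Mx = ⊥ := hp.2 _ (lt_of_le_of_ne inf_le_left hne)
      obtain ⟨m0, hm0p, hm0⟩ : ∃ m0, m0 ∈ p ∧ m0 ≠ 0 := by
        by_contra hcon
        push_neg at hcon
        exact hp.1 (eq_bot_iff.mpr fun y hy => by
          simp only [Submodule.mem_bot]
          exact hcon y hy)
      have claim : ∀ i : ℕ, ∀ m' : M, m' ∈ p → m' ≠ 0 → HO.x ^ i • m' ≠ 0 := by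
        intro i
        induction i with
        | zero => intro m' _ hne0; rwa [pow_zero, one_smul]
        | succ i ih =>
          intro m' hmp hne0
          have hxm : HO.x • m' ∈ p := p.smul_mem _ hmp
          have hxne : HO.x • m' ≠ 0 := by
            intro h0
            have hin : m' ∈ p ⊓ Mx := ⟨hmp, h0⟩
            rw [hbot] at hin
            exact hne0 (by simpa using hin)
          rw [pow_succ, mul_smul]
          exact ih _ hxm hxne
      exact claim n m0 hm0p hm0 (hn m0)
  -- Part 2, M^x ⊆ soc
  have hMxsoc : ∀ m : M, HO.x • m = 0 → m ∈ modSocle H M := by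
    intro m hm
    letI : Module (MonoidAlgebra k G) ↥Mx := Module.compHom _ HO.emb.toRingHom
    have hcomp : ∀ (c : MonoidAlgebra k G) (nn : ↥Mx), c • nn = HO.emb c • nn :=
      fun _ _ => rfl
    have hx0 : ∀ nn : ↥Mx, HO.x • nn = 0 := by
      intro nn
      apply Subtype.ext
      show HO.x • (nn : M) = 0
      exact nn.2
    have htop := IsSemisimpleModule.sSup_simples_eq_top (MonoidAlgebra k G) ↥Mx
    have hmem : (⟨m, hm⟩ : ↥Mx) ∈
        sSup {p : Submodule (MonoidAlgebra k G) ↥Mx | IsSimpleModule (MonoidAlgebra k G) p} := by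
      rw [htop]; trivial
    let NN : Submodule (MonoidAlgebra k G) ↥Mx :=
      { carrier := {nn | (nn : M) ∈ modSocle H M}
        add_mem' := fun {a' b'} ha' hb' => by
          simp only [Set.mem_setOf_eq] at *
          rw [Submodule.coe_add]
          exact (modSocle H M).add_mem ha' hb'
        zero_mem' := by
          simp only [Set.mem_setOf_eq, Submodule.coe_zero]
          exact (modSocle H M).zero_mem
        smul_mem' := fun c nn hnn => by
          simp only [Set.mem_setOf_eq] at *
          rw [hcomp]
          show ((HO.emb c • nn : ↥Mx) : M) ∈ modSocle H M
          rw [Submodule.coe_smul]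
          exact (modSocle H M).smul_mem _ hnn }
    have hub : ∀ p ∈ {p : Submodule (MonoidAlgebra k G) ↥Mx |
        IsSimpleModule (MonoidAlgebra k G) p}, p ≤ NN := by
      intro p hp
      have hpatom : IsAtom p := isSimpleModule_iff_isAtom.mp hp
      let pH : Submodule H ↥Mx := auxToH HO hcomp hx0 p
      let Fp : Submodule H M := Submodule.map Mx.subtype pH
      have hFatom : IsAtom Fp := by
        constructor
        · intro hbot
          apply hpatom.1
          rw [eq_bot_iff]
          intro nn hnn
          have h1 : (nn : M) ∈ Fp := ⟨nn, hnn, rfl⟩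
          rw [hbot] at h1
          simp only [Submodule.mem_bot] at h1 ⊢
          exact Subtype.ext h1
        · intro q hq
          let qG : Submodule (MonoidAlgebra k G) ↥Mx :=
            { carrier := {nn | (nn : M) ∈ q}
              add_mem' := fun {a' b'} ha' hb' => by
                simp only [Set.mem_setOf_eq] at *
                rw [Submodule.coe_add]
                exact q.add_mem ha' hb'
              zero_mem' := by
                simp only [Set.mem_setOf_eq, Submodule.coe_zero]
                exact q.zero_mem
              smul_mem' := fun c nn hnn => by
                simp only [Set.mem_setOf_eq] at *
                rw [hcomp]
                show ((HO.emb c • nn : ↥Mx) : M) ∈ q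
                rw [Submodule.coe_smul]
                exact q.smul_mem _ hnn }
          have h1 : qG ⊓ p ≠ p := by
            intro he
            apply hq.ne
            refine le_antisymm hq.le ?_
            rintro _ ⟨nn, hnnp, rfl⟩
            have hpq : p ≤ qG := he ▸ inf_le_left
            exact hpq hnnp
          have h2 : qG ⊓ p = ⊥ := hpatom.2 _ (lt_of_le_of_ne inf_le_right h1)
          rw [eq_bot_iff]
          intro m' hm'q
          obtain ⟨nn, hnnp, rfl⟩ := hq.le hm'q
          have hin : nn ∈ qG ⊓ p := ⟨hm'q, hnnp⟩
          rw [h2] at hin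
          simp only [Submodule.mem_bot] at hin ⊢
          rw [hin]
          rfl
      intro nn hnn
      show (nn : M) ∈ modSocle H M
      have hFle : Fp ≤ modSocle H M := le_sSup hFatom
      exact hFle ⟨nn, hnn, rfl⟩
    exact Submodule.mem_sSup.mp hmem NN hub
  refine ⟨le_antisymm hQle hradQ, fun m => ⟨hMxsoc m, fun hsoc => hsocMx hsoc⟩⟩

end HopfOrePaper
end

section
/- Assume kG is finite dimensional and semisimple. Let M be a finite dimensional indecomposable H-module all of whose composition factors are isomorphic to V_j for some j ∈ I. Then M ≅ V_t(i) for some i ∈ I and some t ≥ 1. -/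
open scoped TensorProduct

namespace HopfOrePaper

variable {k G H : Type} [Field k] [Group G] [Ring H] [Algebra k H] {χ : G →* kˣ}

section Aux
set_option linter.unusedSectionVars false

variable {k G H : Type} [Field k] [Group G] [Ring H] [Algebra k H] {χ : G →* kˣ}
variable (HO : HopfOre k G H χ)
variable {M : Type} [AddCommGroup M] [Module k M] [Module H M] [IsScalarTower k H M]

/-- The action of `x` as a `k`-linear endomorphism. -/
noncomputable def XM : M →ₗ[k] M where
  toFun m := HO.x • m
  map_add' m n := smul_add _ m n
  map_smul' c m := by
    simp only [RingHom.id_apply]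
    exact (smul_comm c HO.x m).symm

@[simp] lemma XM_apply (m : M) : XM HO m = HO.x • m := rfl

/-- A `k`-subspace stable under the `G`-action. -/
def GStable (p : Submodule k M) : Prop :=
  ∀ g : G, ∀ m ∈ p, HO.emb (MonoidAlgebra.of k G g) • m ∈ p

/-- A `k`-subspace stable under the `x`-action. -/
def XStable (p : Submodule k M) : Prop := ∀ m ∈ p, HO.x • m ∈ p

lemma key_rel (g : G) : HO.emb (MonoidAlgebra.of k G g) * HO.x
    = ((χ g : kˣ) : k) • (HO.x * HO.emb (MonoidAlgebra.of k G g)) := by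
  rw [HO.comm_rel g, smul_smul, Units.mul_inv, one_smul]

lemma gx_comm (g : G) (m : M) :
    HO.emb (MonoidAlgebra.of k G g) • (HO.x • m)
      = ((χ g : kˣ) : k) • (HO.x • (HO.emb (MonoidAlgebra.of k G g) • m)) := by
  rw [← mul_smul, key_rel, smul_assoc, mul_smul]

lemma gpow_comm (g : G) (n : ℕ) (m : M) :
    HO.emb (MonoidAlgebra.of k G g) • ((XM HO ^ n) m)
      = (((χ g : kˣ) : k) ^ n) • (XM HO ^ n) (HO.emb (MonoidAlgebra.of k G g) • m) := by
  induction n with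
  | zero => simp
  | succ n ih =>
    rw [pow_succ', Module.End.mul_apply, pow_succ', Module.End.mul_apply, XM_apply, XM_apply,
      gx_comm, ih, ← smul_comm (((χ g : kˣ) : k) ^ n) HO.x, smul_smul, ← pow_succ']

lemma XM_pow_apply (n : ℕ) (m : M) : (XM HO ^ n) m = HO.x ^ n • m := by
  induction n with
  | zero => simp
  | succ n ih =>
    rw [pow_succ', Module.End.mul_apply, XM_apply, ih, ← mul_smul, ← pow_succ']

lemma gstable_top : GStable HO (⊤ : Submodule k M) := fun _ _ _ => trivial

lemma xstable_top : XStable HO (⊤ : Submodule k M) := fun _ _ => trivial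

lemma gstable_inf {p q : Submodule k M} (hp : GStable HO p) (hq : GStable HO q) :
    GStable HO (p ⊓ q) := fun g m hm => ⟨hp g m hm.1, hq g m hm.2⟩

lemma gstable_sup {p q : Submodule k M} (hp : GStable HO p) (hq : GStable HO q) :
    GStable HO (p ⊔ q) := by
  intro g m hm
  obtain ⟨y, hy, z, hz, rfl⟩ := Submodule.mem_sup.mp hm
  rw [smul_add]
  exact Submodule.add_mem_sup (hp g y hy) (hq g z hz)

lemma xstable_sup {p q : Submodule k M} (hp : XStable HO p) (hq : XStable HO q) :
    XStable HO (p ⊔ q) := by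
  intro m hm
  obtain ⟨y, hy, z, hz, rfl⟩ := Submodule.mem_sup.mp hm
  rw [smul_add]
  exact Submodule.add_mem_sup (hp y hy) (hq z hz)

lemma gstable_ker_pow (n : ℕ) : GStable HO (LinearMap.ker (XM HO ^ n) : Submodule k M) := by
  intro g m hm
  rw [LinearMap.mem_ker] at hm ⊢
  have h := gpow_comm HO g n m
  rw [hm, smul_zero] at h
  have hχ : (((χ g : kˣ) : k) ^ n) ≠ 0 := pow_ne_zero _ (Units.ne_zero _)
  exact (smul_eq_zero.mp h.symm).resolve_left hχ

lemma gstable_map_pow (n : ℕ) {p : Submodule k M} (hp : GStable HO p) :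
    GStable HO (p.map (XM HO ^ n)) := by
  rintro g m hm
  obtain ⟨u, hu, rfl⟩ := Submodule.mem_map.mp hm
  refine Submodule.mem_map.mpr ⟨(((χ g : kˣ) : k) ^ n) • HO.emb (MonoidAlgebra.of k G g) • u,
    p.smul_mem _ (hp g u hu), ?_⟩
  rw [map_smul, ← gpow_comm]

lemma xpow_smul_mem {p : Submodule k M} (hp : XStable HO p) (i : ℕ) {m : M} (hm : m ∈ p) :
    HO.x ^ i • m ∈ p := by
  induction i with
  | zero => simpa using hm
  | succ i ih =>
    rw [pow_succ', mul_smul]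
    exact hp _ ih

lemma xstable_pow_mem {p : Submodule k M} (hp : XStable HO p) (n : ℕ) {m : M} (hm : m ∈ p) :
    (XM HO ^ n) m ∈ p := by
  rw [XM_pow_apply]
  exact xpow_smul_mem HO hp n hm

end Aux
section Aux2
set_option linter.unusedSectionVars false

variable {k G H : Type} [Field k] [Group G] [Ring H] [Algebra k H] {χ : G →* kˣ}
variable (HO : HopfOre k G H χ)
variable {M : Type} [AddCommGroup M] [Module k M] [Module H M] [IsScalarTower k H M]

/-- `Wsum U n = U + x U + ⋯ + x^(n-1) U`. -/
noncomputable def Wsum (U : Submodule k M) : ℕ → Submodule k M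
  | 0 => ⊥
  | n + 1 => Wsum U n ⊔ U.map (XM HO ^ n)

@[simp] lemma Wsum_zero (U : Submodule k M) : Wsum HO U 0 = ⊥ := rfl

lemma Wsum_succ (U : Submodule k M) (n : ℕ) :
    Wsum HO U (n + 1) = Wsum HO U n ⊔ U.map (XM HO ^ n) := rfl

lemma map_le_Wsum (U : Submodule k M) {j n : ℕ} (h : j < n) :
    U.map (XM HO ^ j) ≤ Wsum HO U n := by
  induction n with
  | zero => omega
  | succ n ih =>
    rcases Nat.lt_succ_iff_lt_or_eq.mp h with h' | rfl
    · exact (ih h').trans le_sup_left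
    · exact le_sup_right

lemma self_le_Wsum (U : Submodule k M) {n : ℕ} (h : 0 < n) : U ≤ Wsum HO U n := by
  have := map_le_Wsum HO U h
  rwa [pow_zero, Module.End.one_eq_id, Submodule.map_id] at this

lemma Wsum_sup (p q : Submodule k M) (n : ℕ) :
    Wsum HO (p ⊔ q) n = Wsum HO p n ⊔ Wsum HO q n := by
  induction n with
  | zero => simp [Wsum]
  | succ n ih =>
    show Wsum HO (p ⊔ q) n ⊔ (p ⊔ q).map (XM HO ^ n) = _
    rw [ih, Submodule.map_sup]
    exact sup_sup_sup_comm _ _ _ _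

lemma mem_Wsum {U : Submodule k M} {n : ℕ} {m : M} (hm : m ∈ Wsum HO U n) :
    ∃ f : ℕ → M, (∀ j, f j ∈ U) ∧ m = ∑ j ∈ Finset.range n, (XM HO ^ j) (f j) := by
  induction n generalizing m with
  | zero =>
    refine ⟨fun _ => 0, fun _ => U.zero_mem, ?_⟩
    simpa using (Submodule.mem_bot k).mp hm
  | succ n ih =>
    obtain ⟨a, ha, b, hb, rfl⟩ := Submodule.mem_sup.mp hm
    obtain ⟨g, hg, rfl⟩ := ih ha
    obtain ⟨u, hu, rfl⟩ := Submodule.mem_map.mp hb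
    refine ⟨fun j => if j < n then g j else u, fun j => by dsimp only; split <;> [exact hg j; exact hu], ?_⟩
    rw [Finset.sum_range_succ]
    congr 1
    · exact Finset.sum_congr rfl fun j hj => by simp [Finset.mem_range.mp hj]
    · simp

lemma sum_mem_Wsum {U : Submodule k M} {n : ℕ} (f : ℕ → M) (hf : ∀ j, f j ∈ U) :
    ∑ j ∈ Finset.range n, (XM HO ^ j) (f j) ∈ Wsum HO U n := by
  refine Submodule.sum_mem _ fun j hj => ?_
  exact map_le_Wsum HO U (Finset.mem_range.mp hj) ⟨f j, hf j, rfl⟩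

lemma Wsum_le {U N : Submodule k M} (hUN : U ≤ N) (hNX : XStable HO N) (n : ℕ) :
    Wsum HO U n ≤ N := by
  induction n with
  | zero => exact bot_le
  | succ n ih =>
    refine sup_le ih ?_
    rintro m ⟨u, hu, rfl⟩
    exact xstable_pow_mem HO hNX n (hUN hu)

lemma gstable_Wsum {U : Submodule k M} (hU : GStable HO U) (n : ℕ) :
    GStable HO (Wsum HO U n) := by
  induction n with
  | zero => intro g m hm; simp_all
  | succ n ih => exact gstable_sup HO ih (gstable_map_pow HO n hU)


lemma XM_mem_Wsum_succ {U : Submodule k M} {n : ℕ} {m : M} (hm : m ∈ Wsum HO U n) :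
    HO.x • m ∈ Wsum HO U (n + 1) := by
  induction n generalizing m with
  | zero => simp_all
  | succ n ih =>
    obtain ⟨a, ha, b, hb, rfl⟩ := Submodule.mem_sup.mp hm
    rw [smul_add]
    refine Submodule.add_mem _ (Submodule.mem_sup_left (ih ha)) ?_
    obtain ⟨u, hu, rfl⟩ := Submodule.mem_map.mp hb
    refine Submodule.mem_sup_right (Submodule.mem_map.mpr ⟨u, hu, ?_⟩)
    rw [pow_succ', Module.End.mul_apply, XM_apply]

lemma Wsum_succ_eq {U : Submodule k M} {n : ℕ} (h : ∀ u ∈ U, (XM HO ^ n) u = 0) :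
    Wsum HO U (n + 1) = Wsum HO U n := by
  show Wsum HO U n ⊔ U.map (XM HO ^ n) = Wsum HO U n
  rw [sup_eq_left]
  rintro m ⟨u, hu, rfl⟩
  rw [h u hu]
  exact Submodule.zero_mem _

lemma xstable_Wsum {U : Submodule k M} {n : ℕ} (h : ∀ u ∈ U, (XM HO ^ n) u = 0) :
    XStable HO (Wsum HO U n) := by
  intro m hm
  have := XM_mem_Wsum_succ HO hm
  rwa [Wsum_succ_eq HO h] at this

lemma Wsum_succ_shift (U : Submodule k M) (n : ℕ) :
    Wsum HO U (n + 1) = U ⊔ Wsum HO (U.map (XM HO)) n := by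
  induction n with
  | zero =>
    show (⊥ : Submodule k M) ⊔ U.map (XM HO ^ 0) = U ⊔ ⊥
    rw [pow_zero, Module.End.one_eq_id, Submodule.map_id, bot_sup_eq, sup_bot_eq]
  | succ n ih =>
    show Wsum HO U (n + 1) ⊔ U.map (XM HO ^ (n + 1)) = U ⊔ (Wsum HO (U.map (XM HO)) n ⊔ (U.map (XM HO)).map (XM HO ^ n))
    rw [ih, sup_assoc, pow_succ, Module.End.mul_eq_comp, Submodule.map_comp]

end Aux2
section Aux3
set_option linter.unusedSectionVars false

variable {k G H : Type} [Field k] [Group G] [Ring H] [Algebra k H] {χ : G →* kˣ}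
variable (HO : HopfOre k G H χ)
variable {M : Type} [AddCommGroup M] [Module k M] [Module H M] [IsScalarTower k H M]

lemma pow_apply_eq_zero_of_ge {N : Submodule k M} {t : ℕ}
    (hXt : ∀ m ∈ N, (XM HO ^ t) m = 0) {a : ℕ} (ha : t ≤ a) {m : M} (hm : m ∈ N) :
    (XM HO ^ a) m = 0 := by
  have : a = (a - t) + t := by omega
  rw [this, pow_add, Module.End.mul_apply, hXt m hm, map_zero]

/-- The key linear independence of `u, xu', x²u'', …` for `u` in a complement of
`ker x^(t-1)`. -/
lemma linj {t : ℕ} {N U : Submodule k M} (hUN : U ≤ N)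
    (hXt : ∀ m ∈ N, (XM HO ^ t) m = 0)
    (hUinj : ∀ u ∈ U, (XM HO ^ (t - 1)) u = 0 → u = 0)
    (f : ℕ → M) (hf : ∀ j, f j ∈ U)
    (hsum : ∑ j ∈ Finset.range t, (XM HO ^ j) (f j) = 0) :
    ∀ j < t, f j = 0 := by
  intro j
  induction j using Nat.strong_induction_on with
  | _ j IH =>
    intro hj
    have key : (XM HO ^ (t - 1 - j)) (∑ i ∈ Finset.range t, (XM HO ^ i) (f i))
        = (XM HO ^ (t - 1)) (f j) := by
      rw [map_sum]
      rw [Finset.sum_eq_single_of_mem j (Finset.mem_range.mpr hj)]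
      · rw [← Module.End.mul_apply, ← pow_add]
        congr 2
        omega
      · intro i hi hij
        rw [← Module.End.mul_apply, ← pow_add]
        rcases lt_or_gt_of_ne hij with h' | h'
        · rw [IH i h' (Finset.mem_range.mp hi), map_zero]
        · exact pow_apply_eq_zero_of_ge HO hXt (by omega) (hUN (hf i))
    rw [hsum, map_zero] at key
    exact hUinj _ (hf j) key.symm

/-- Promote a `G`- and `x`-stable `k`-subspace to an `H`-submodule. -/
def toH (p : Submodule k M) (hpG : GStable HO p) (hpX : XStable HO p) : Submodule H M where
  carrier := p
  add_mem' := fun ha hb => p.add_mem ha hb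
  zero_mem' := p.zero_mem
  smul_mem' := by
    intro h m hm
    have hh : h ∈ Submodule.span k
        (Set.range fun pr : G × ℕ => HO.emb (MonoidAlgebra.of k G pr.1) * HO.x ^ pr.2) := by
      rw [HO.basis_span]; trivial
    induction hh using Submodule.span_induction with
    | mem y hy =>
      obtain ⟨⟨g, i⟩, rfl⟩ := hy
      rw [mul_smul]
      exact hpG g _ (xpow_smul_mem HO hpX i hm)
    | zero => rw [zero_smul]; exact p.zero_mem
    | add y z _ _ hy hz => rw [add_smul]; exact p.add_mem hy hz
    | smul c y _ hy => rw [smul_assoc]; exact p.smul_mem c hy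

lemma mem_toH {p : Submodule k M} {hpG : GStable HO p} {hpX : XStable HO p} {m : M} :
    m ∈ toH HO p hpG hpX ↔ m ∈ p := Iff.rfl

lemma toH_eq_bot {p : Submodule k M} {hpG : GStable HO p} {hpX : XStable HO p} :
    toH HO p hpG hpX = ⊥ ↔ p = ⊥ := by
  constructor <;> intro h
  · rw [eq_bot_iff]
    intro m hm
    have : m ∈ toH HO p hpG hpX := hm
    rw [h] at this
    simpa using this
  · rw [eq_bot_iff]
    intro m hm
    have : m ∈ p := hm
    rw [h] at this
    simpa using this

lemma isCompl_toH {p q : Submodule k M} {hpG hpX hqG hqX}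
    (hinf : p ⊓ q = ⊥) (hsup : p ⊔ q = ⊤) :
    IsCompl (toH HO p hpG hpX) (toH HO q hqG hqX) := by
  constructor
  · rw [disjoint_iff, eq_bot_iff]
    intro m hm
    obtain ⟨h1, h2⟩ := Submodule.mem_inf.mp hm
    have : m ∈ p ⊓ q := Submodule.mem_inf.mpr ⟨h1, h2⟩
    rw [hinf] at this
    simpa using this
  · rw [codisjoint_iff, eq_top_iff]
    intro m _
    have : m ∈ p ⊔ q := by rw [hsup]; trivial
    obtain ⟨y, hy, z, hz, rfl⟩ := Submodule.mem_sup.mp this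
    exact Submodule.add_mem_sup (show y ∈ toH HO p hpG hpX from hy)
      (show z ∈ toH HO q hqG hqX from hz)

/-- Existence of `G`-stable complements, from semisimplicity of `kG`. -/
lemma exists_gstable_compl (hss : IsSemisimpleRing (MonoidAlgebra k G))
    (p q : Submodule k M) (hpG : GStable HO p) (hqG : GStable HO q) (hpq : p ≤ q) :
    ∃ r : Submodule k M, GStable HO r ∧ r ≤ q ∧ p ⊓ r = ⊥ ∧ p ⊔ r = q := by
  letI : Module (MonoidAlgebra k G) M := Module.compHom M HO.emb.toRingHom
  haveI := hss
  have hsmul : ∀ (a : MonoidAlgebra k G) (m : M), a • m = HO.emb a • m := fun a m => rfl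
  let pA : Submodule (MonoidAlgebra k G) M :=
    { carrier := p
      add_mem' := fun ha hb => p.add_mem ha hb
      zero_mem' := p.zero_mem
      smul_mem' := by
        intro a m hm
        rw [hsmul]
        induction a using MonoidAlgebra.induction_on with
        | of g => exact hpG g m hm
        | add f g hf hg => rw [map_add, add_smul]; exact p.add_mem hf hg
        | smul r f hf => rw [map_smul, smul_assoc]; exact p.smul_mem r hf }
  obtain ⟨c, hc⟩ := exists_isCompl pA
  have hksmul : ∀ (s : k) (m : M), m ∈ c → s • m ∈ c := by
    intro s m hm
    have h1 : (algebraMap k (MonoidAlgebra k G) s) • m ∈ c := c.smul_mem _ hm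
    rw [hsmul, AlgHom.commutes, algebraMap_smul] at h1
    exact h1
  let r : Submodule k M :=
    { carrier := {m : M | m ∈ c ∧ m ∈ q}
      add_mem' := fun ha hb => ⟨c.add_mem ha.1 hb.1, q.add_mem ha.2 hb.2⟩
      zero_mem' := ⟨c.zero_mem, q.zero_mem⟩
      smul_mem' := fun s m hm => ⟨hksmul s m hm.1, q.smul_mem s hm.2⟩ }
  have hrG : GStable HO r := by
    intro g m hm
    obtain ⟨hm1, hm2⟩ : m ∈ c ∧ m ∈ q := hm
    have h1 := c.smul_mem (MonoidAlgebra.of k G g) hm1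
    rw [hsmul] at h1
    exact show _ ∈ c ∧ _ ∈ q from ⟨h1, hqG g m hm2⟩
  have hmem : ∀ m : M, m ∈ r ↔ m ∈ c ∧ m ∈ q := fun m => Iff.rfl
  have hrq : r ≤ q := fun m hm => ((hmem m).mp hm).2
  refine ⟨r, hrG, hrq, ?_, ?_⟩
  · rw [eq_bot_iff]
    intro m hm
    obtain ⟨hmp, hmr⟩ := Submodule.mem_inf.mp hm
    have : m ∈ pA ⊓ c := Submodule.mem_inf.mpr ⟨hmp, ((hmem m).mp hmr).1⟩
    rw [hc.inf_eq_bot] at this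
    simpa using this
  · apply le_antisymm (sup_le hpq hrq)
    intro m hm
    have : m ∈ pA ⊔ c := by rw [hc.sup_eq_top]; trivial
    obtain ⟨y, hy, z, hz, rfl⟩ := Submodule.mem_sup.mp this
    refine Submodule.add_mem_sup (show y ∈ p from hy) ?_
    have hzq : (y + z) - y ∈ q := q.sub_mem hm (hpq hy)
    rw [add_sub_cancel_left] at hzq
    exact (hmem z).mpr ⟨hz, hzq⟩

end Aux3
section Aux4
set_option linter.unusedSectionVars false
set_option maxHeartbeats 1000000

variable {k G H : Type} [Field k] [Group G] [Ring H] [Algebra k H] {χ : G →* kˣ}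
variable (HO : HopfOre k G H χ)
variable {M : Type} [AddCommGroup M] [Module k M] [Module H M] [IsScalarTower k H M]

/-- The key splitting lemma: the "free" part `U + xU + ⋯ + x^(t-1)U` generated by a
`G`-stable subspace `U` meeting `ker x^(t-1)` trivially splits off `G`- and `x`-stably. -/
lemma split (hss : IsSemisimpleRing (MonoidAlgebra k G)) :
    ∀ (t : ℕ) (N U : Submodule k M), GStable HO N → XStable HO N → GStable HO U →
    U ≤ N → (∀ m ∈ N, (XM HO ^ t) m = 0) → (∀ u ∈ U, (XM HO ^ (t - 1)) u = 0 → u = 0) →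
    ∃ W' : Submodule k M, GStable HO W' ∧ XStable HO W' ∧ W' ≤ N ∧
      Wsum HO U t ⊓ W' = ⊥ ∧ Wsum HO U t ⊔ W' = N := by
  intro t
  induction t with
  | zero =>
    intro N U hNG hNX hUG hUN hXt hUinj
    exact ⟨N, hNG, hNX, le_rfl, by simp, by simp⟩
  | succ t ih =>
    intro N U hNG hNX hUG hUN hXt hUinj
    rw [Nat.add_sub_cancel] at hUinj
    set K := N ⊓ LinearMap.ker (XM HO ^ t) with hKdef
    have hKG : GStable HO K := gstable_inf HO hNG (gstable_ker_pow HO t)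
    have hKN : K ≤ N := inf_le_left
    have hXK : ∀ m ∈ K, (XM HO ^ t) m = 0 := fun m hm => (Submodule.mem_inf.mp hm).2
    have hKX : XStable HO K := by
      intro m hm
      obtain ⟨hmN, hmker⟩ := Submodule.mem_inf.mp hm
      refine Submodule.mem_inf.mpr ⟨hNX m hmN, ?_⟩
      rw [LinearMap.mem_ker]
      have he : (XM HO ^ t) (HO.x • m) = (XM HO ^ (t + 1)) m := by
        rw [pow_succ, Module.End.mul_apply, XM_apply]
      rw [he]
      exact hXt m hmN
    have hmemK : ∀ m, m ∈ N → (XM HO ^ t) m = 0 → m ∈ K :=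
      fun m h1 h2 => Submodule.mem_inf.mpr ⟨h1, LinearMap.mem_ker.mpr h2⟩
    obtain ⟨C, hCG, hCN, hC_bot, hC_sup⟩ := exists_gstable_compl HO hss (U ⊔ K) N
      (gstable_sup HO hUG hKG) hNG (sup_le hUN hKN)
    set Ut := U ⊔ C with hUtdef
    have hUtG : GStable HO Ut := gstable_sup HO hUG hCG
    have hUtN : Ut ≤ N := sup_le hUN hCN
    have hUC_bot : U ⊓ C = ⊥ := by
      rw [eq_bot_iff]
      intro m hm
      obtain ⟨h1, h2⟩ := Submodule.mem_inf.mp hm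
      have : m ∈ (U ⊔ K) ⊓ C := Submodule.mem_inf.mpr ⟨Submodule.mem_sup_left h1, h2⟩
      rw [hC_bot] at this
      simpa using this
    have hUtK_bot : Ut ⊓ K = ⊥ := by
      rw [eq_bot_iff]
      intro m hm
      obtain ⟨h1, h2⟩ := Submodule.mem_inf.mp hm
      obtain ⟨u, hu, c, hc, rfl⟩ := Submodule.mem_sup.mp h1
      have hcUK : c ∈ (U ⊔ K) ⊓ C := Submodule.mem_inf.mpr
        ⟨by
          have : (u + c) - u ∈ U ⊔ K := Submodule.sub_mem _
            (Submodule.mem_sup_right h2) (Submodule.mem_sup_left hu)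
          rwa [add_sub_cancel_left] at this, hc⟩
      rw [hC_bot] at hcUK
      rw [Submodule.mem_bot] at hcUK
      subst hcUK
      rw [add_zero] at h2 ⊢
      have : u ∈ U ⊓ K := Submodule.mem_inf.mpr ⟨hu, h2⟩
      have hUK_bot : U ⊓ K = ⊥ := by
        rw [eq_bot_iff]
        intro v hv
        obtain ⟨hv1, hv2⟩ := Submodule.mem_inf.mp hv
        rw [Submodule.mem_bot]
        exact hUinj v hv1 (hXK v hv2)
      rw [hUK_bot] at this
      simpa using this
    have hUtK_sup : Ut ⊔ K = N := by
      rw [hUtdef, sup_right_comm, hC_sup]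
    have hUt_inj : ∀ u ∈ Ut, (XM HO ^ t) u = 0 → u = 0 := by
      intro u hu h0
      have : u ∈ Ut ⊓ K := Submodule.mem_inf.mpr ⟨hu, hmemK u (hUtN hu) h0⟩
      rw [hUtK_bot] at this
      simpa using this
    set U1 := Ut.map (XM HO) with hU1def
    have hU1G : GStable HO U1 := by
      have := gstable_map_pow HO 1 hUtG
      rwa [pow_one] at this
    have hU1K : U1 ≤ K := by
      rintro m ⟨u, hu, rfl⟩
      refine hmemK _ (hNX u (hUtN hu)) ?_
      have he : (XM HO ^ t) (XM HO u) = (XM HO ^ (t + 1)) u := by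
        rw [pow_succ, Module.End.mul_apply]
      rw [he]
      exact hXt u (hUtN hu)
    have hU1inj : ∀ u ∈ U1, (XM HO ^ (t - 1)) u = 0 → u = 0 := by
      rintro m ⟨u, hu, rfl⟩ hm
      rcases Nat.eq_zero_or_pos t with rfl | ht
      · simpa using hm
      · have h0 : (XM HO ^ t) u = 0 := by
          have : t = (t - 1) + 1 := by omega
          rw [this, pow_succ, Module.End.mul_apply]
          exact hm
        have : u ∈ Ut ⊓ K := Submodule.mem_inf.mpr ⟨hu, hmemK u (hUtN hu) h0⟩
        rw [hUtK_bot] at this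
        rw [Submodule.mem_bot] at this
        rw [this, map_zero]
    obtain ⟨W'', hW''G, hW''X, hW''K, hW''_bot, hW''_sup⟩ :=
      ih K U1 hKG hKX hU1G hU1K hXK hU1inj
    -- the key intersection computation
    have claim1 : Wsum HO Ut (t + 1) ⊓ K = Wsum HO U1 t := by
      apply le_antisymm
      · intro m hm
        obtain ⟨hmW, hmK⟩ := Submodule.mem_inf.mp hm
        obtain ⟨f, hf, rfl⟩ := mem_Wsum HO hmW
        have hf0 : f 0 = 0 := by
          have h1 : (XM HO ^ t) (∑ j ∈ Finset.range (t + 1), (XM HO ^ j) (f j)) = 0 :=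
            hXK _ hmK
          rw [map_sum] at h1
          have hside : ∀ i ∈ Finset.range (t + 1), i ≠ 0 →
              (XM HO ^ t) ((XM HO ^ i) (f i)) = 0 := by
            intro i hi hi0
            rw [← Module.End.mul_apply, ← pow_add]
            exact pow_apply_eq_zero_of_ge HO hXt (by omega) (hUtN (hf i))
          rw [Finset.sum_eq_single_of_mem 0 (Finset.mem_range.mpr (Nat.succ_pos t)) hside] at h1
          apply hUt_inj _ (hf 0)
          simpa using h1
        rw [Finset.sum_range_succ']
        rw [hf0, map_zero, add_zero]
        refine Submodule.sum_mem _ fun j hj => ?_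
        refine map_le_Wsum HO U1 (Finset.mem_range.mp hj) ?_
        refine Submodule.mem_map.mpr ⟨XM HO (f (j + 1)), ⟨f (j + 1), hf (j + 1), rfl⟩, ?_⟩
        rw [← Module.End.mul_apply, ← pow_succ]
      · refine le_inf ?_ ?_
        · rw [Wsum_succ_shift]
          exact le_sup_right
        · rw [← hW''_sup]
          exact le_sup_left
    refine ⟨Wsum HO C (t + 1) ⊔ W'', ?_, ?_, ?_, ?_, ?_⟩
    · exact gstable_sup HO (gstable_Wsum HO hCG (t + 1)) hW''G
    · refine xstable_sup HO (xstable_Wsum HO fun c hc => ?_) hW''X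
      exact hXt c (hCN hc)
    · exact sup_le (Wsum_le HO hCN hNX (t + 1)) (hW''K.trans hKN)
    · rw [eq_bot_iff]
      intro w hw
      obtain ⟨hw1, hw2⟩ := Submodule.mem_inf.mp hw
      obtain ⟨c', hc', w2, hw2', rfl⟩ := Submodule.mem_sup.mp hw2
      obtain ⟨g, hg, rfl⟩ := mem_Wsum HO hc'
      obtain ⟨f, hf, hfe⟩ := mem_Wsum HO hw1
      set d : ℕ → M := fun j => f j - g j with hddef
      have hdUt : ∀ j, d j ∈ Ut := fun j =>
        Submodule.sub_mem _ (Submodule.mem_sup_left (hf j)) (Submodule.mem_sup_right (hg j))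
      have hdsum : ∑ j ∈ Finset.range (t + 1), (XM HO ^ j) (d j) = w2 := by
        have hterm : ∀ j, (XM HO ^ j) (d j) = (XM HO ^ j) (f j) - (XM HO ^ j) (g j) := by
          intro j
          show (XM HO ^ j) (f j - g j) = _
          exact map_sub _ _ _
        rw [Finset.sum_congr rfl fun j _ => hterm j, Finset.sum_sub_distrib, ← hfe,
          add_sub_cancel_left]
      have hw2W : w2 ∈ Wsum HO Ut (t + 1) := by
        rw [← hdsum]
        exact sum_mem_Wsum HO d hdUt
      have hw2K : w2 ∈ K := hW''K hw2'
      have hw2U1 : w2 ∈ Wsum HO U1 t := by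
        rw [← claim1]
        exact Submodule.mem_inf.mpr ⟨hw2W, hw2K⟩
      have hw20 : w2 = 0 := by
        have : w2 ∈ Wsum HO U1 t ⊓ W'' := Submodule.mem_inf.mpr ⟨hw2U1, hw2'⟩
        rw [hW''_bot] at this
        simpa using this
      have hUt_inj' : ∀ u ∈ Ut, (XM HO ^ (t + 1 - 1)) u = 0 → u = 0 := by
        simpa using hUt_inj
      have hd0 : ∀ j < t + 1, d j = 0 := by
        apply linj HO hUtN hXt hUt_inj' d hdUt
        rw [hdsum, hw20]
      have hfg : ∀ j < t + 1, f j = 0 := by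
        intro j hj
        have h1 : f j - g j = 0 := hd0 j hj
        have h2 : f j = g j := by rwa [sub_eq_zero] at h1
        have : f j ∈ U ⊓ C := Submodule.mem_inf.mpr ⟨hf j, h2 ▸ hg j⟩
        rw [hUC_bot] at this
        simpa using this
      rw [Submodule.mem_bot, hfe]
      rw [Finset.sum_congr rfl fun j hj => by rw [hfg j (Finset.mem_range.mp hj), map_zero]]
      exact Finset.sum_const_zero
    · rw [← sup_assoc, ← Wsum_sup, ← hUtdef, Wsum_succ_shift, ← hU1def, sup_assoc,
        hW''_sup, hUtK_sup]
end Aux4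
section Aux5
set_option linter.unusedSectionVars false

variable {k G H : Type} [Field k] [Group G] [Ring H] [Algebra k H] {χ : G →* kˣ}
variable (HO : HopfOre k G H χ)
variable {M : Type} [AddCommGroup M] [Module k M] [Module H M] [IsScalarTower k H M]

/-- The representation of `G` on a `G`-stable subspace. -/
noncomputable def restrictRep (U : Submodule k M) (hU : GStable HO U) :
    Representation k G ↥U where
  toFun g := (resRep HO M g).restrict (fun m hm => hU g m hm)
  map_one' := by
    ext v
    show HO.emb (MonoidAlgebra.of k G 1) • (v : M) = (v : M)
    rw [map_one, map_one, one_smul]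
  map_mul' g h := by
    ext v
    show HO.emb (MonoidAlgebra.of k G (g * h)) • (v : M)
      = HO.emb (MonoidAlgebra.of k G g) • HO.emb (MonoidAlgebra.of k G h) • (v : M)
    rw [map_mul, map_mul, mul_smul]

lemma restrictRep_coe (U : Submodule k M) (hU : GStable HO U) (g : G) (v : ↥U) :
    (restrictRep HO U hU g v : M) = HO.emb (MonoidAlgebra.of k G g) • (v : M) := rfl

end Aux5

set_option maxHeartbeats 1000000



/-- **Theorem 4.6.** Assume `kG` is finite-dimensional and semisimple.  Let `M` be a
finite-dimensional indecomposable `H`-module each of whose composition factors is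
`x`-torsion (i.e. isomorphic to some `V_j`).  Then `M ≅ V_t(i) = M(V_i)/x^tM(V_i)`
for some simple `kG`-module `V_i` and some `t ≥ 1`. -/
theorem stmt_9 {k G H : Type} [Field k] [IsAlgClosed k] [Group G] [Finite G]
    [Ring H] [Algebra k H]
    {χ : G →* kˣ} (a : G) (ha : a ∈ Subgroup.center G) (hχa : χ a ≠ 1)
    (hss : IsSemisimpleRing (MonoidAlgebra k G))
    (HO : HopfOre k G H χ)
    (M : Type) [AddCommGroup M] [Module k M] [Module H M] [IsScalarTower k H M]
    [FiniteDimensional k M]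
    (hind : IsIndecomposableMod H M)
    (hcf : ∃ cs : CompositionSeries (Submodule H M),
      cs 0 = ⊥ ∧ cs (Fin.last cs.length) = ⊤ ∧
      ∀ j : Fin cs.length, ∀ m ∈ cs j.succ, HO.x • m ∈ cs j.castSucc) :
    ∃ t : ℕ, 0 < t ∧ Nonempty (StdWitness HO M (HO.x ^ t) t) := by
  classical
  obtain ⟨hMnt, hdec⟩ := hind
  -- Step 1: `x` acts nilpotently on `M`.
  have hnil : ∃ n : ℕ, ∀ m : M, (XM HO ^ n) m = 0 := by
    obtain ⟨cs, h0, hlast, hstep⟩ := hcf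
    have key : ∀ n : ℕ, ∀ i : Fin (cs.length + 1), (i : ℕ) ≤ n →
        ∀ m ∈ cs i, (XM HO ^ n) m = 0 := by
      intro n
      induction n with
      | zero =>
        intro i hi m hm
        have hi0 : i = 0 := Fin.ext (by simpa using hi)
        rw [hi0, h0, Submodule.mem_bot] at hm
        simp [hm]
      | succ n ihn =>
        intro i hi m hm
        rcases Nat.eq_zero_or_pos (i : ℕ) with h0' | hpos
        · have hi0 : i = 0 := Fin.ext (by simpa using h0')
          rw [hi0, h0, Submodule.mem_bot] at hm
          simp [hm]
        · have hjlt : (i : ℕ) - 1 < cs.length := by omega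
          have hisucc : i = (⟨(i : ℕ) - 1, hjlt⟩ : Fin cs.length).succ := by
            apply Fin.ext
            simp only [Fin.val_succ]
            omega
          have hx : HO.x • m ∈ cs (⟨(i : ℕ) - 1, hjlt⟩ : Fin cs.length).castSucc := by
            apply hstep
            rw [← hisucc]
            exact hm
          have hrec : (XM HO ^ n) (HO.x • m) = 0 := by
            apply ihn (⟨(i : ℕ) - 1, hjlt⟩ : Fin cs.length).castSucc _ _ hx
            simp only [Fin.coe_castSucc]
            omega
          rw [pow_succ, Module.End.mul_apply, XM_apply]
          exact hrec
    refine ⟨cs.length, fun m => key cs.length (Fin.last _) (by simp) m ?_⟩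
    rw [hlast]
    trivial
  -- Step 2: the nilpotency index `t`.
  set t := Nat.find hnil with htdef
  have htP : ∀ m : M, (XM HO ^ t) m = 0 := Nat.find_spec hnil
  have ht1 : 0 < t := by
    rcases Nat.eq_zero_or_pos t with h0 | h
    · exfalso
      obtain ⟨b, b', hab⟩ := hMnt
      apply hab
      have hb := htP b
      have hb' := htP b'
      rw [h0, pow_zero, Module.End.one_apply] at hb hb'
      rw [hb, hb']
    · exact h
  have hnotlow : ¬ ∀ m : M, (XM HO ^ (t - 1)) m = 0 := Nat.find_min hnil (by omega)
  have hXtall : ∀ u : M, u ∈ (⊤ : Submodule k M) → (XM HO ^ t) u = 0 := fun u _ => htP u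
  -- Step 3: a `G`-stable complement `U` of `ker x^(t-1)`.
  obtain ⟨U, hUG, -, hU_bot, hU_sup⟩ := exists_gstable_compl HO hss
    (LinearMap.ker (XM HO ^ (t - 1))) (⊤ : Submodule k M) (gstable_ker_pow HO _)
    (gstable_top HO) le_top
  have hUinj : ∀ u ∈ U, (XM HO ^ (t - 1)) u = 0 → u = 0 := by
    intro u hu h
    have hmem : u ∈ LinearMap.ker (XM HO ^ (t - 1)) ⊓ U :=
      Submodule.mem_inf.mpr ⟨LinearMap.mem_ker.mpr h, hu⟩
    rw [hU_bot] at hmem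
    simpa using hmem
  have hUne : U ≠ ⊥ := by
    intro hbot
    apply hnotlow
    intro m
    have hmem : m ∈ LinearMap.ker (XM HO ^ (t - 1)) ⊔ U := by rw [hU_sup]; trivial
    rw [hbot, sup_bot_eq, LinearMap.mem_ker] at hmem
    exact hmem
  -- Step 4: `M = U ⊕ xU ⊕ ⋯ ⊕ x^(t-1)U` by indecomposability.
  obtain ⟨W', hW'G, hW'X, -, hW'_bot, hW'_sup⟩ := split HO hss t (⊤ : Submodule k M) U
    (gstable_top HO) (xstable_top HO) hUG le_top hXtall hUinj
  have hXtU : ∀ u ∈ U, (XM HO ^ t) u = 0 := fun u _ => htP u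
  have hWsG : GStable HO (Wsum HO U t) := gstable_Wsum HO hUG t
  have hWsX : XStable HO (Wsum HO U t) := xstable_Wsum HO hXtU
  have hWtop : Wsum HO U t = ⊤ := by
    rcases hdec _ _ (isCompl_toH HO (hpG := hWsG) (hpX := hWsX) (hqG := hW'G) (hqX := hW'X)
        hW'_bot hW'_sup) with h | h
    · exfalso
      apply hUne
      have hws : Wsum HO U t = ⊥ := (toH_eq_bot HO).mp h
      exact eq_bot_iff.mpr (hws ▸ self_le_Wsum HO U ht1)
    · have hW'bot : W' = ⊥ := (toH_eq_bot HO).mp h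
      rw [hW'bot, sup_bot_eq] at hW'_sup
      exact hW'_sup
  -- Step 5: `U` is a simple `kG`-module, again by indecomposability.
  have hsimpleSub : ∀ p : Submodule k M, GStable HO p → p ≤ U → p = ⊥ ∨ p = U := by
    intro p hpG hpU
    obtain ⟨q, hqG, hqU, hpq_bot, hpq_sup⟩ := exists_gstable_compl HO hss p U hpG hUG hpU
    have hXp : ∀ u ∈ p, (XM HO ^ t) u = 0 := fun u _ => htP u
    have hXq : ∀ u ∈ q, (XM HO ^ t) u = 0 := fun u _ => htP u
    have hsup : Wsum HO p t ⊔ Wsum HO q t = ⊤ := by rw [← Wsum_sup, hpq_sup, hWtop]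
    have hinf : Wsum HO p t ⊓ Wsum HO q t = ⊥ := by
      rw [eq_bot_iff]
      intro w hw
      obtain ⟨hw1, hw2⟩ := Submodule.mem_inf.mp hw
      obtain ⟨f, hf, rfl⟩ := mem_Wsum HO hw1
      obtain ⟨g, hg, hge⟩ := mem_Wsum HO hw2
      have hdU : ∀ j, f j - g j ∈ U := fun j => U.sub_mem (hpU (hf j)) (hqU (hg j))
      have hdsum : ∑ j ∈ Finset.range t, (XM HO ^ j) (f j - g j) = 0 := by
        have hterm : ∀ j, (XM HO ^ j) (f j - g j) = (XM HO ^ j) (f j) - (XM HO ^ j) (g j) :=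
          fun j => map_sub _ _ _
        rw [Finset.sum_congr rfl fun j _ => hterm j, Finset.sum_sub_distrib, ← hge, sub_self]
      have hd0 := linj HO (le_top : U ≤ ⊤) hXtall hUinj _ hdU hdsum
      have hf0 : ∀ j < t, f j = 0 := by
        intro j hj
        have h1 := hd0 j hj
        rw [sub_eq_zero] at h1
        have h2 : f j ∈ p ⊓ q := Submodule.mem_inf.mpr ⟨hf j, h1 ▸ hg j⟩
        rw [hpq_bot] at h2
        simpa using h2
      rw [Submodule.mem_bot]
      rw [Finset.sum_congr rfl fun j hj => by rw [hf0 j (Finset.mem_range.mp hj), map_zero]]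
      exact Finset.sum_const_zero
    rcases hdec _ _ (isCompl_toH HO (hpG := gstable_Wsum HO hpG t) (hpX := xstable_Wsum HO hXp)
        (hqG := gstable_Wsum HO hqG t) (hqX := xstable_Wsum HO hXq) hinf hsup) with h | h
    · left
      have hws : Wsum HO p t = ⊥ := (toH_eq_bot HO).mp h
      exact eq_bot_iff.mpr (hws ▸ self_le_Wsum HO p ht1)
    · right
      have hws : Wsum HO q t = ⊥ := (toH_eq_bot HO).mp h
      have hq0 : q = ⊥ := eq_bot_iff.mpr (hws ▸ self_le_Wsum HO q ht1)
      rw [hq0, sup_bot_eq] at hpq_sup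
      exact hpq_sup
  have hUsimple : IsSimpleRep (restrictRep HO U hUG) := by
    constructor
    · exact Submodule.nontrivial_iff_ne_bot.mpr hUne
    · intro π hπ
      have hpU : π.map U.subtype ≤ U := by
        rintro m ⟨v, hv, rfl⟩
        exact v.2
      have hpG : GStable HO (π.map U.subtype) := by
        rintro g m ⟨v, hv, rfl⟩
        exact ⟨restrictRep HO U hUG g v, hπ g v hv, rfl⟩
      rcases hsimpleSub (π.map U.subtype) hpG hpU with h | h
      · left
        apply Submodule.map_injective_of_injective (Submodule.injective_subtype U)
        rw [Submodule.map_bot]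
        exact h
      · right
        apply Submodule.map_injective_of_injective (Submodule.injective_subtype U)
        rw [Submodule.map_subtype_top]
        exact h
  -- Step 6: assemble the standard witness.
  refine ⟨t, ht1, ⟨StdWitness.mk (V := ↥U) (ρ := restrictRep HO U hUG)
    (fin := inferInstance) (simple := hUsimple) (e := U.subtype) (std := ?_)⟩⟩
  constructor
  · intro g v
    rfl
  · intro w
    rw [← XM_pow_apply]
    exact htP w
  · constructor
    · -- injectivity
      intro f f' hff
      set dfun : ℕ → M := fun j => if h : j < t then ((f ⟨j, h⟩ : M) - (f' ⟨j, h⟩ : M)) else 0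
        with hdfun
      have hdval : ∀ j : Fin t, dfun (j : ℕ) = (f j : M) - (f' j : M) := by
        intro j
        simp [hdfun, j.isLt]
      have hdmem : ∀ j, dfun j ∈ U := by
        intro j
        rw [hdfun]
        dsimp only
        split
        · exact U.sub_mem (f _).2 (f' _).2
        · exact U.zero_mem
      have hdsum : ∑ j ∈ Finset.range t, (XM HO ^ j) (dfun j) = 0 := by
        rw [← Fin.sum_univ_eq_sum_range (fun j => (XM HO ^ j) (dfun j)) t]
        have hterm : ∀ j : Fin t, (XM HO ^ (j : ℕ)) (dfun (j : ℕ))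
            = HO.x ^ (j : ℕ) • (U.subtype (f j)) - HO.x ^ (j : ℕ) • (U.subtype (f' j)) := by
          intro j
          rw [hdval j, map_sub, XM_pow_apply, XM_pow_apply]
          rfl
        have hff' : (∑ j : Fin t, HO.x ^ (j : ℕ) • U.subtype (f j))
            = ∑ j : Fin t, HO.x ^ (j : ℕ) • U.subtype (f' j) := hff
        rw [Finset.sum_congr rfl fun j _ => hterm j, Finset.sum_sub_distrib, hff', sub_self]
      have hd0 := linj HO (le_top : U ≤ ⊤) hXtall hUinj dfun hdmem hdsum
      funext j
      have h1 := hd0 (j : ℕ) j.isLt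
      rw [hdval j, sub_eq_zero] at h1
      exact Subtype.ext h1
    · -- surjectivity
      intro m
      have hm : m ∈ Wsum HO U t := by rw [hWtop]; trivial
      obtain ⟨f, hf, rfl⟩ := mem_Wsum HO hm
      refine ⟨fun j => ⟨f (j : ℕ), hf (j : ℕ)⟩, ?_⟩
      show (∑ j : Fin t, HO.x ^ (j : ℕ) • U.subtype ⟨f (j : ℕ), hf (j : ℕ)⟩)
          = ∑ j ∈ Finset.range t, (XM HO ^ j) (f j)
      have hterm : ∀ j : Fin t, HO.x ^ (j : ℕ) • (U.subtype ⟨f (j : ℕ), hf (j : ℕ)⟩)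
          = (XM HO ^ (j : ℕ)) (f (j : ℕ)) := by
        intro j
        rw [XM_pow_apply]
        rfl
      rw [Finset.sum_congr rfl fun j _ => hterm j,
        Fin.sum_univ_eq_sum_range (fun j => (XM HO ^ j) (f j)) t]

end HopfOrePaper
end

section
/- Assume kG is finite dimensional and semisimple and |q| = |χ| = s. If M is a finite dimensional indecomposable H-module with (x^s − β)M = 0 for some β ∈ k^×, then M is simple and M ≅ V(i,β) for some i ∈ I. -/
open scoped TensorProduct

namespace HopfOrePaper

variable {k G H : Type} [Field k] [Group G] [Ring H] [Algebra k H] {χ : G →* kˣ}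

section Aux

variable {k G H : Type} [Field k] [Group G] [Ring H] [Algebra k H] {χ : G →* kˣ}

/-- shorthand for the image of a group element in `H`. -/
noncomputable def HopfOre.ge (HO : HopfOre k G H χ) (g : G) : H :=
  HO.emb (MonoidAlgebra.of k G g)

variable (HO : HopfOre k G H χ)
variable {M : Type} [AddCommGroup M] [Module k M] [Module H M] [IsScalarTower k H M]

lemma ksmul_comm' (c : k) (h : H) (m : M) : h • (c • m) = c • (h • m) := by
  rw [← algebraMap_smul H c m, ← mul_smul, ← Algebra.commutes, mul_smul, algebraMap_smul]

/-- The action of `x^j` as a `k`-linear map. -/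
noncomputable def xpowL (j : ℕ) : M →ₗ[k] M where
  toFun m := HO.x ^ j • m
  map_add' m n := smul_add _ m n
  map_smul' c m := by
    show HO.x ^ j • (c • m) = _
    rw [RingHom.id_apply, ksmul_comm']
  
lemma ge_def (g : G) : HO.emb (MonoidAlgebra.of k G g) = HO.ge g := rfl

lemma ksmul_comm (c : k) (h : H) (m : M) : h • (c • m) = c • (h • m) := by
  rw [← algebraMap_smul H c m, ← mul_smul, ← Algebra.commutes, mul_smul, algebraMap_smul]

lemma ge_mul : HO.ge g * HO.ge g' = HO.ge (g * g') := by
  rw [HopfOre.ge, HopfOre.ge, HopfOre.ge, ← map_mul, ← map_mul]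

lemma ge_smul_ge (m : M) : HO.ge g • HO.ge g' • m = HO.ge (g * g') • m := by
  rw [← mul_smul, ge_mul]

lemma ge_one_smul (m : M) : HO.ge (1 : G) • m = m := by
  rw [HopfOre.ge, map_one, map_one, one_smul]

lemma ge_inv_smul (g : G) (m : M) : HO.ge g⁻¹ • HO.ge g • m = m := by
  rw [ge_smul_ge, inv_mul_cancel, ge_one_smul]

lemma ge_smul_inj (g : G) {m m' : M} (h : HO.ge g • m = HO.ge g • m') : m = m' := by
  rw [← ge_inv_smul HO g m, h, ge_inv_smul]

lemma ge_mul_x (g : G) : HO.ge g * HO.x = ((χ g : kˣ) : k) • (HO.x * HO.ge g) := by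
  have h := HO.comm_rel g
  have : ((χ g : kˣ) : k) • (HO.x * HO.ge g)
      = (((χ g : kˣ) : k) * (((χ g)⁻¹ : kˣ) : k)) • (HO.ge g * HO.x) := by
    rw [HopfOre.ge, h, smul_smul]
  rw [this, ← Units.val_mul, mul_inv_cancel, Units.val_one, one_smul]

lemma ge_mul_xpow (g : G) (n : ℕ) :
    HO.ge g * HO.x ^ n = (((χ g : kˣ) : k) ^ n) • (HO.x ^ n * HO.ge g) := by
  induction n with
  | zero => simp
  | succ n ih =>
    rw [pow_succ, ← mul_assoc, ih, smul_mul_assoc, mul_assoc, ge_mul_x, mul_smul_comm,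
      smul_smul, ← mul_assoc, ← pow_succ, ← pow_succ]

lemma ge_smul_xpow (g : G) (n : ℕ) (m : M) :
    HO.ge g • HO.x ^ n • m = (((χ g : kˣ) : k) ^ n) • HO.x ^ n • HO.ge g • m := by
  rw [← mul_smul, ge_mul_xpow, smul_assoc, mul_smul]

lemma xpow_smul_ge (g : G) (n : ℕ) (m : M) :
    HO.x ^ n • HO.ge g • m = ((((χ g)⁻¹ : kˣ) : k) ^ n) • HO.ge g • HO.x ^ n • m := by
  have hc : (((((χ g)⁻¹ : kˣ) : k)) ^ n) * ((((χ g) : kˣ) : k) ^ n) = 1 := by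
    rw [← mul_pow, ← Units.val_mul, inv_mul_cancel, Units.val_one, one_pow]
  conv_rhs => rw [ge_smul_xpow HO g n m, smul_smul, hc, one_smul]

section SBeta

variable (s : ℕ) (β : k)

lemma xpow_mul_s_smul (hxs : ∀ m : M, HO.x ^ s • m = β • m) (t : ℕ) (m : M) :
    HO.x ^ (s * t) • m = β ^ t • m := by
  induction t with
  | zero => simp
  | succ t ih =>
    rw [Nat.mul_succ, pow_add, mul_smul, hxs, ksmul_comm, ih, smul_smul, ← pow_succ']

lemma xpow_reduce (hxs : ∀ m : M, HO.x ^ s • m = β • m) (n : ℕ) (m : M) :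
    HO.x ^ n • m = β ^ (n / s) • HO.x ^ (n % s) • m := by
  conv_lhs => rw [← Nat.div_add_mod n s]
  rw [pow_add, mul_smul, xpow_mul_s_smul HO s β hxs]

lemma x_smul_inj (hβ : β ≠ 0) (hs : 0 < s) (hxs : ∀ m : M, HO.x ^ s • m = β • m)
    {m : M} (h : HO.x • m = 0) : m = 0 := by
  have h1 : HO.x ^ s • m = 0 := by
    have : s = (s - 1) + 1 := (Nat.succ_pred_eq_of_pos hs).symm
    rw [this, pow_succ, mul_smul, h, smul_zero]
  rw [hxs] at h1
  simpa [hβ] using h1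

lemma xpow_smul_inj (hβ : β ≠ 0) (hs : 0 < s) (hxs : ∀ m : M, HO.x ^ s • m = β • m)
    (j : ℕ) : ∀ {m : M}, HO.x ^ j • m = 0 → m = 0 := by
  induction j with
  | zero => intro m h; simpa using h
  | succ j ih =>
    intro m h
    have h' : HO.x ^ j • (HO.x • m) = 0 := by rw [← mul_smul, ← pow_succ]; exact h
    exact x_smul_inj HO s β hβ hs hxs (ih h')

/-- the inverse of the action of `x`, as a linear map. -/
noncomputable def nuL : M →ₗ[k] M where
  toFun m := β⁻¹ • HO.x ^ (s - 1) • m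
  map_add' m n := by
    show β⁻¹ • HO.x ^ (s - 1) • (m + n) = _
    rw [smul_add, smul_add]
  map_smul' c m := by
    show β⁻¹ • HO.x ^ (s - 1) • (c • m) = _
    rw [RingHom.id_apply, ksmul_comm, smul_comm]

lemma nuL_apply (m : M) : nuL HO s β m = β⁻¹ • HO.x ^ (s - 1) • m := rfl

lemma nu_iter_ksmul (j : ℕ) (c : k) : ∀ m : M,
    (nuL HO s β)^[j] (c • m) = c • (nuL HO s β)^[j] m := by
  induction j with
  | zero => intro m; simp
  | succ j ih =>
    intro m
    rw [Function.iterate_succ_apply, map_smul, ih, ← Function.iterate_succ_apply]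

section nu
variable (hβ : β ≠ 0) (hs : 0 < s) (hxs : ∀ m : M, HO.x ^ s • m = β • m)
include hβ hs hxs

lemma x_nu (m : M) : HO.x • nuL HO s β m = m := by
  rw [nuL_apply, ksmul_comm, ← mul_smul, ← pow_succ', Nat.sub_add_cancel hs, hxs,
    smul_smul, inv_mul_cancel₀ hβ, one_smul]

lemma nu_x (m : M) : nuL HO s β (HO.x • m) = m := by
  rw [nuL_apply, ← mul_smul, ← pow_succ, Nat.sub_add_cancel hs, hxs,
    smul_smul, inv_mul_cancel₀ hβ, one_smul]

lemma nu_inj {m m' : M} (h : nuL HO s β m = nuL HO s β m') : m = m' := by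
  rw [← x_nu HO s β hβ hs hxs m, h, x_nu HO s β hβ hs hxs]

lemma xpow_nu_iter (j : ℕ) (m : M) : HO.x ^ j • (nuL HO s β)^[j] m = m := by
  induction j with
  | zero => simp
  | succ j ih =>
    rw [Function.iterate_succ_apply', pow_succ, mul_smul, x_nu HO s β hβ hs hxs, ih]

lemma beta_nu_s (m : M) : β • (nuL HO s β)^[s] m = m := by
  rw [← hxs ((nuL HO s β)^[s] m), xpow_nu_iter HO s β hβ hs hxs]

lemma beta_nu_pred (m : M) : β • (nuL HO s β)^[s - 1] m = HO.x • m := by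
  apply nu_inj HO s β hβ hs hxs
  have hit : (nuL HO s β) ((nuL HO s β)^[s - 1] m) = (nuL HO s β)^[s - 1 + 1] m :=
    (Function.iterate_succ_apply' _ _ _).symm
  rw [map_smul, hit, Nat.sub_add_cancel hs,
    beta_nu_s HO s β hβ hs hxs, nu_x HO s β hβ hs hxs]

lemma nu_iter_ge (hchi : ∀ g : G, χ g ^ s = 1) (g : G) (j : ℕ) : ∀ m : M,
    (nuL HO s β)^[j] (HO.ge g • m)
      = (((χ g : kˣ) : k) ^ j) • HO.ge g • (nuL HO s β)^[j] m := by
  have hkey : ∀ m : M, nuL HO s β (HO.ge g • m)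
      = ((χ g : kˣ) : k) • HO.ge g • nuL HO s β m := by
    intro m
    have hpow : ((((χ g)⁻¹ : kˣ) : k) ^ (s - 1)) = ((χ g : kˣ) : k) := by
      have : ((χ g)⁻¹ : kˣ) ^ (s - 1) = χ g := by
        rw [inv_pow, inv_eq_iff_mul_eq_one, ← pow_succ, Nat.sub_add_cancel hs, hchi]
      rw [← Units.val_pow_eq_pow_val, this]
    rw [nuL_apply, xpow_smul_ge, hpow, nuL_apply, ksmul_comm, smul_comm β⁻¹]
  induction j with
  | zero => intro m; simp
  | succ j ih =>
    intro m
    rw [Function.iterate_succ_apply, hkey, nu_iter_ksmul, ih, smul_smul, ← pow_succ',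
      ← Function.iterate_succ_apply]

end nu

end SBeta


/-- The action of a group element as a `k`-linear map. -/
noncomputable def geL (g : G) : M →ₗ[k] M where
  toFun m := HO.ge g • m
  map_add' m n := smul_add _ m n
  map_smul' c m := by
    show HO.ge g • (c • m) = _
    rw [RingHom.id_apply, ksmul_comm']

lemma geL_apply (g : G) (m : M) : geL HO g m = HO.ge g • m := rfl

lemma eig_zero {ι : Type} (T : M →ₗ[k] M) :
    ∀ (S : Finset ι) (μ : ι → k) (w : ι → M), Set.InjOn μ S →
      (∀ j ∈ S, T (w j) = μ j • w j) → (∑ j ∈ S, w j) = 0 → ∀ j ∈ S, w j = 0 := by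
  classical
  intro S
  induction S using Finset.induction_on with
  | empty => intro μ w _ _ _ j hj; simp at hj
  | @insert a s ha ih =>
    intro μ w hinj hw hsum
    set u : ι → M := fun j => (μ j - μ a) • w j with hu
    have hTsum : ∑ j ∈ insert a s, μ j • w j = 0 := by
      have := congrArg T hsum
      rw [map_sum, map_zero] at this
      rw [← this]
      exact Finset.sum_congr rfl fun j hj => (hw j hj).symm
    have hasum : ∑ j ∈ insert a s, μ a • w j = 0 := by
      rw [← Finset.smul_sum, hsum, smul_zero]
    have husum : ∑ j ∈ insert a s, u j = 0 := by
      simp only [hu, sub_smul]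
      rw [Finset.sum_sub_distrib, hTsum, hasum, sub_zero]
    have husum' : ∑ j ∈ s, u j = 0 := by
      rw [Finset.sum_insert ha] at husum
      simpa [hu] using husum
    have hzero : ∀ j ∈ s, u j = 0 := by
      refine ih μ u (hinj.mono (Finset.subset_insert a s)) (fun j hj => ?_) husum'
      rw [hu]
      simp only [map_smul, hw j (Finset.mem_insert_of_mem hj), smul_smul, mul_comm]
    have hws : ∀ j ∈ s, w j = 0 := by
      intro j hj
      have hne : μ j - μ a ≠ 0 := by
        refine sub_ne_zero.mpr fun heq => ha ?_
        have := hinj (Finset.mem_insert_of_mem hj) (Finset.mem_insert_self a s) heq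
        rwa [← this]
      have := hzero j hj
      rw [hu] at this
      simpa [hne] using this
    have hwa : w a = 0 := by
      rw [Finset.sum_insert ha, Finset.sum_eq_zero hws, add_zero] at hsum
      exact hsum
    intro j hj
    rcases Finset.mem_insert.mp hj with h | h
    · rw [h]; exact hwa
    · exact hws j h

lemma smul_mem_of_gen (N : Submodule k M)
    (hgen : ∀ (g : G) (i : ℕ), ∀ m ∈ N, (HO.ge g * HO.x ^ i) • m ∈ N) (h : H) :
    ∀ m ∈ N, h • m ∈ N := by
  have hh : h ∈ Submodule.span k
      (Set.range fun p : G × ℕ => HO.emb (MonoidAlgebra.of k G p.1) * HO.x ^ p.2) := by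
    rw [HO.basis_span]; trivial
  induction hh using Submodule.span_induction with
  | mem b hb =>
    obtain ⟨⟨g, i⟩, rfl⟩ := hb
    exact hgen g i
  | zero => intro m hm; rw [zero_smul]; exact N.zero_mem
  | add b c _ _ hb hc => intro m hm; rw [add_smul]; exact N.add_mem (hb m hm) (hc m hm)
  | smul c b _ hb => intro m hm; rw [smul_assoc]; exact N.smul_mem c (hb m hm)

lemma hsmul_comm_of_gen (π : M →ₗ[k] M)
    (hx : ∀ m : M, π (HO.x • m) = HO.x • π m)
    (hg : ∀ (g : G) (m : M), π (HO.ge g • m) = HO.ge g • π m) (h : H) :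
    ∀ m : M, π (h • m) = h • π m := by
  have hxp : ∀ (i : ℕ) (m : M), π (HO.x ^ i • m) = HO.x ^ i • π m := by
    intro i
    induction i with
    | zero => intro m; simp
    | succ i ih =>
      intro m
      rw [pow_succ', mul_smul, hx, ih, ← mul_smul, ← pow_succ']
  have hh : h ∈ Submodule.span k
      (Set.range fun p : G × ℕ => HO.emb (MonoidAlgebra.of k G p.1) * HO.x ^ p.2) := by
    rw [HO.basis_span]; trivial
  induction hh using Submodule.span_induction with
  | mem b hb =>
    obtain ⟨⟨g, i⟩, rfl⟩ := hb
    intro m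
    rw [mul_smul, mul_smul, ge_def, hg, hxp]
  | zero => intro m; simp
  | add b c _ _ hb hc => intro m; rw [add_smul, add_smul, map_add, hb, hc]
  | smul c b _ hb => intro m; rw [smul_assoc, smul_assoc, map_smul, hb]

lemma exists_kG_proj (hss : IsSemisimpleRing (MonoidAlgebra k G)) (P : Submodule H M) :
    ∃ π : M →ₗ[k] M, (∀ m : M, π m ∈ P) ∧ (∀ m ∈ P, π m = m) ∧
      (∀ (g : G) (m : M), π (HO.ge g • m) = HO.ge g • π m) := by
  letI : Module (MonoidAlgebra k G) M := Module.compHom M HO.emb.toRingHom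
  haveI := hss
  have hbr : ∀ (z : MonoidAlgebra k G) (m : M), z • m = HO.emb z • m := fun _ _ => rfl
  let P' : Submodule (MonoidAlgebra k G) M :=
    { carrier := P
      add_mem' := fun hm hn => P.add_mem hm hn
      zero_mem' := P.zero_mem
      smul_mem' := fun z m hm => by
        show z • m ∈ P
        rw [hbr]
        exact P.smul_mem _ hm }
  obtain ⟨Q', hQ'⟩ := exists_isCompl P'
  let π0 : M →ₗ[MonoidAlgebra k G] M :=
    P'.subtype.comp (P'.projectionOnto Q' hQ')
  have hπ0P : ∀ m : M, π0 m ∈ P := fun m => (P'.projectionOnto Q' hQ' m).2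
  have hπ0fix : ∀ m ∈ P, π0 m = m := by
    intro m hm
    show ((P'.projectionOnto Q' hQ') m : M) = m
    rw [Submodule.projectionOnto_apply_left hQ' ⟨m, hm⟩]
  refine ⟨{ toFun := π0
            map_add' := π0.map_add
            map_smul' := fun c m => ?_ }, hπ0P, hπ0fix, fun g m => ?_⟩
  · show π0 (c • m) = c • π0 m
    have h1 : c • m = (algebraMap k (MonoidAlgebra k G) c) • m := by
      rw [hbr, AlgHom.commutes, algebraMap_smul]
    have h2 : c • π0 m = (algebraMap k (MonoidAlgebra k G) c) • π0 m := by
      rw [hbr, AlgHom.commutes, algebraMap_smul]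
    rw [h1, h2, map_smul]
  · show π0 (HO.ge g • m) = HO.ge g • π0 m
    have h1 : HO.ge g • m = (MonoidAlgebra.of k G g) • m := (hbr _ m).symm
    have h2 : HO.ge g • π0 m = (MonoidAlgebra.of k G g) • π0 m := (hbr _ (π0 m)).symm
    rw [h1, h2, map_smul]

lemma xpowL_apply (j : ℕ) (m : M) : xpowL HO j m = HO.x ^ j • m := rfl

lemma isSimple_of_indec (hss : IsSemisimpleRing (MonoidAlgebra k G))
    (s : ℕ) (β : k) (hβ : β ≠ 0) (hs : 0 < s) (hsk : (s : k) ≠ 0)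
    (hchi : ∀ g : G, χ g ^ s = 1)
    (hxs : ∀ m : M, HO.x ^ s • m = β • m)
    (hind : IsIndecomposableMod H M) : IsSimpleModule H M := by
  haveI : Nontrivial M := hind.1
  haveI : Nontrivial (Submodule H M) := ⟨⊥, ⊤, bot_ne_top⟩
  refine { toIsSimpleOrder := ⟨fun P => ?_⟩ }
  obtain ⟨π, hπP, hπfix, hπg⟩ := exists_kG_proj HO hss P
  have hPk : ∀ (c : k), ∀ m ∈ P, c • m ∈ P := fun c m hm => by
    rw [← algebraMap_smul H c m]; exact P.smul_mem _ hm
  set ν : M →ₗ[k] M := nuL HO s β with hν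
  set π2 : M →ₗ[k] M :=
    (s : k)⁻¹ • ∑ j ∈ Finset.range s, (xpowL HO j).comp (π.comp (ν ^ j)) with hπ2def
  have hπ2 : ∀ m : M, π2 m
      = (s : k)⁻¹ • ∑ j ∈ Finset.range s, HO.x ^ j • π ((⇑ν)^[j] m) := by
    intro m
    rw [hπ2def, LinearMap.smul_apply, LinearMap.sum_apply]
    congr 1
    refine Finset.sum_congr rfl fun j _ => ?_
    rw [LinearMap.comp_apply, LinearMap.comp_apply, Module.End.pow_apply, xpowL_apply]
  have hνP : ∀ (j : ℕ), ∀ m ∈ P, (⇑ν)^[j] m ∈ P := by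
    intro j
    induction j with
    | zero => intro m hm; simpa using hm
    | succ j ih =>
      intro m hm
      rw [Function.iterate_succ_apply]
      exact ih _ (hPk _ _ (P.smul_mem _ hm))
  have hπ2P : ∀ m : M, π2 m ∈ P := by
    intro m
    rw [hπ2]
    refine hPk _ _ (Submodule.sum_mem P fun j _ => P.smul_mem _ (hπP _))
  have hπ2fix : ∀ m ∈ P, π2 m = m := by
    intro m hm
    rw [hπ2]
    have : ∀ j ∈ Finset.range s, HO.x ^ j • π ((⇑ν)^[j] m) = m := by
      intro j _
      rw [hπfix _ (hνP j m hm), hν, xpow_nu_iter HO s β hβ hs hxs]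
    rw [Finset.sum_congr rfl this, Finset.sum_const, Finset.card_range,
      ← Nat.cast_smul_eq_nsmul k s m, smul_smul, inv_mul_cancel₀ hsk, one_smul]
  have hπ2g : ∀ (g : G) (m : M), π2 (HO.ge g • m) = HO.ge g • π2 m := by
    intro g m
    rw [hπ2, hπ2, ksmul_comm']
    conv_rhs => rw [Finset.smul_sum]
    congr 1
    refine Finset.sum_congr rfl fun j _ => ?_
    rw [hν, nu_iter_ge HO s β hβ hs hxs hchi, map_smul, hπg, ksmul_comm',
      xpow_smul_ge, smul_smul, smul_smul, ← mul_pow, ← Units.val_mul,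
      mul_inv_cancel, Units.val_one, one_pow, one_smul]
  have hπ2x : ∀ m : M, π2 (HO.x • m) = HO.x • π2 m := by
    intro m
    rw [hπ2, hπ2, ksmul_comm']
    conv_rhs => rw [Finset.smul_sum]
    congr 1
    have hAB : ∀ j : ℕ, HO.x ^ (j + 1) • π ((⇑ν)^[j + 1] (HO.x • m))
        = HO.x • HO.x ^ j • π ((⇑ν)^[j] m) := by
      intro j
      rw [Function.iterate_succ_apply, hν, nu_x HO s β hβ hs hxs, ← mul_smul, ← pow_succ']
    have hA0 : π ((⇑ν)^[0] (HO.x • m)) = HO.x • HO.x ^ (s - 1) • π ((⇑ν)^[s - 1] m) := by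
      rw [← mul_smul, ← pow_succ', Nat.sub_add_cancel hs, hxs, ← map_smul, hν,
        beta_nu_pred HO s β hβ hs hxs, Function.iterate_zero_apply]
    have h1 : ∑ j ∈ Finset.range s, HO.x ^ j • π ((⇑ν)^[j] (HO.x • m))
        = ∑ j ∈ Finset.range (s - 1 + 1), HO.x ^ j • π ((⇑ν)^[j] (HO.x • m)) := by
      rw [Nat.sub_add_cancel hs]
    have h2 : ∑ j ∈ Finset.range s, HO.x • HO.x ^ j • π ((⇑ν)^[j] m)
        = ∑ j ∈ Finset.range (s - 1 + 1), HO.x • HO.x ^ j • π ((⇑ν)^[j] m) := by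
      rw [Nat.sub_add_cancel hs]
    rw [h1, h2, Finset.sum_range_succ', Finset.sum_range_succ]
    congr 1
    · exact Finset.sum_congr rfl fun j _ => hAB j
    · rw [pow_zero, one_smul]; exact hA0
  have hπ2H : ∀ (h : H) (m : M), π2 (h • m) = h • π2 m :=
    fun h => hsmul_comm_of_gen HO π2 hπ2x hπ2g h
  let π2H : M →ₗ[H] M :=
    { toFun := π2
      map_add' := π2.map_add
      map_smul' := fun h m => hπ2H h m }
  have hcompl : IsCompl P (LinearMap.ker π2H) := by
    constructor
    · rw [disjoint_iff]
      rw [eq_bot_iff]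
      rintro m ⟨hmP, hmQ⟩
      have h0 : π2 m = 0 := hmQ
      have h1 : π2 m = m := hπ2fix m hmP
      rw [h1] at h0
      simpa using h0
    · rw [codisjoint_iff, eq_top_iff]
      intro m _
      have h1 : π2 m ∈ P := hπ2P m
      have h2 : m - π2 m ∈ LinearMap.ker π2H := by
        have : π2 (m - π2 m) = 0 := by
          rw [map_sub, hπ2fix _ h1, sub_self]
        exact this
      exact Submodule.mem_sup.mpr ⟨π2 m, h1, m - π2 m, h2, by abel⟩
  rcases hind.2 P (LinearMap.ker π2H) hcompl with h | h
  · left; exact h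
  · right
    rw [eq_top_iff]
    intro m _
    have h2 : m - π2 m ∈ LinearMap.ker π2H := by
      have : π2 (m - π2 m) = 0 := by
        rw [map_sub, hπ2fix _ (hπ2P m), sub_self]
      exact this
    rw [h, Submodule.mem_bot, sub_eq_zero] at h2
    rw [h2]
    exact hπ2P m

end Aux

/-- **Lemma 4.7.** Assume `kG` is finite-dimensional and semisimple and `|q| = |χ| = s`.
If `M` is a finite-dimensional indecomposable `H`-module with `(x^s - β)M = 0` for some
`β ∈ k^×`, then `M` is simple and `M ≅ V(i,β)` for some simple `kG`-module `V_i`. -/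
theorem stmt_10 {k G H : Type} [Field k] [IsAlgClosed k] [Group G] [Finite G]
    [Ring H] [Algebra k H]
    {χ : G →* kˣ} (a : G) (ha : a ∈ Subgroup.center G) (hχa : χ a ≠ 1)
    (hss : IsSemisimpleRing (MonoidAlgebra k G))
    (s : ℕ) (hs : 1 < s) (hχord : orderOf χ = s) (hqord : orderOf (χ a) = s)
    (HO : HopfOre k G H χ)
    (M : Type) [AddCommGroup M] [Module k M] [Module H M] [IsScalarTower k H M]
    [FiniteDimensional k M] (hind : IsIndecomposableMod H M)
    (β : k) (hβ : β ≠ 0)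
    (hann : ∀ m : M, (HO.x ^ s - algebraMap k H β) • m = 0) :
    IsSimpleModule H M ∧
      Nonempty (StdWitness HO M (HO.x ^ s - algebraMap k H β) s) := by
  classical
  have hs0 : 0 < s := by omega
  haveI : NeZero s := ⟨by omega⟩
  have hchiU : ∀ g : G, χ g ^ s = 1 := by
    intro g
    have h : χ ^ s = 1 := by rw [← hχord]; exact pow_orderOf_eq_one χ
    calc χ g ^ s = (χ ^ s) g := (MonoidHom.pow_apply χ s g).symm
    _ = 1 := by rw [h]; rfl
  have hq : IsPrimitiveRoot (χ a) s := hqord ▸ IsPrimitiveRoot.orderOf (χ a)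
  have hsk : (s : k) ≠ 0 := ((IsPrimitiveRoot.coe_units_iff.mpr hq).neZero').out
  have hxs : ∀ m : M, HO.x ^ s • m = β • m := by
    intro m
    have h := hann m
    rw [sub_smul] at h
    have h2 := sub_eq_zero.mp h
    rwa [algebraMap_smul] at h2
  have hsimple : IsSimpleModule H M := isSimple_of_indec HO hss s β hβ hs0 hsk hchiU hxs hind
  refine ⟨hsimple, ?_⟩
  haveI hMnt : Nontrivial M := hind.1
  -- a minimal `G`-stable subspace of `M`
  set Gst : Submodule k M → Prop := fun p => ∀ g : G, ∀ m ∈ p, HO.ge g • m ∈ p with hGst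
  have hex : ∃ n : ℕ, ∃ p : Submodule k M, Gst p ∧ p ≠ ⊥ ∧ Module.finrank k p = n :=
    ⟨Module.finrank k (⊤ : Submodule k M), ⊤, fun g m _ => trivial, Ne.symm bot_ne_top, rfl⟩
  obtain ⟨V, hVst, hVne, hVrank⟩ := Nat.find_spec hex
  have hmin : ∀ p : Submodule k M, Gst p → p ≠ ⊥ → p ≤ V → p = V := by
    intro p hp hpne hple
    refine Submodule.eq_of_le_of_finrank_le hple ?_
    rw [hVrank]
    exact Nat.find_le ⟨p, hp, hpne, rfl⟩
  haveI hVnt : Nontrivial ↥V := Submodule.nontrivial_iff_ne_bot.mpr hVne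
  -- `a` acts on `V` by a scalar `lam`
  set Aop : M →ₗ[k] M := geL HO a with hAop
  have hAV : ∀ m ∈ V, Aop m ∈ V := fun m hm => hVst a m hm
  obtain ⟨lam, hlam⟩ := Module.End.exists_eigenvalue (Aop.restrict hAV)
  obtain ⟨v0, hv0⟩ := hlam.exists_hasEigenvector
  have hE : ∀ m ∈ V, HO.ge a • m = lam • m := by
    set E : Submodule k M := V ⊓ LinearMap.ker (Aop - lam • LinearMap.id) with hEdef
    have hker : ∀ m : M, m ∈ LinearMap.ker (Aop - lam • LinearMap.id) ↔
        HO.ge a • m = lam • m := by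
      intro m
      rw [LinearMap.mem_ker, LinearMap.sub_apply, LinearMap.smul_apply, LinearMap.id_apply,
        sub_eq_zero, hAop, geL_apply]
    have hEst : Gst E := by
      rintro g m ⟨hm1, hm2⟩
      have hm2' := (hker m).mp hm2
      refine ⟨hVst g m hm1, (hker _).mpr ?_⟩
      have hc : a * g = g * a := (Subgroup.mem_center_iff.mp ha g).symm
      rw [ge_smul_ge, hc, ← ge_smul_ge, hm2', ksmul_comm']
    have hEne : E ≠ ⊥ := by
      have hv0E : (v0 : M) ∈ E := by
        refine ⟨v0.2, (hker _).mpr ?_⟩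
        have h1 : Aop.restrict hAV v0 = lam • v0 := hv0.apply_eq_smul
        have h2 : Aop (v0 : M) = ((Aop.restrict hAV) v0 : M) := rfl
        have h3 : Aop (v0 : M) = lam • (v0 : M) := by
          rw [h2, h1]; rfl
        rw [hAop, geL_apply] at h3
        exact h3
      intro hbot
      rw [hbot, Submodule.mem_bot] at hv0E
      exact hv0.2 (Subtype.ext hv0E)
    have hEeq : E = V := hmin E hEst hEne inf_le_left
    intro m hm
    have hmE : m ∈ E := hEeq.symm ▸ hm
    exact (hker m).mp hmE.2
  have hlam0 : lam ≠ 0 := by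
    intro h0
    obtain ⟨w, hwV, hw0⟩ := (Submodule.ne_bot_iff V).mp hVne
    have h1 := hE w hwV
    rw [h0, zero_smul] at h1
    have h2 : HO.ge a⁻¹ • HO.ge a • w = 0 := by rw [h1, smul_zero]
    rw [ge_inv_smul] at h2
    exact hw0 h2
  -- the representation of `G` on `V`
  set ρ : Representation k G ↥V :=
    { toFun := fun g =>
        { toFun := fun v => ⟨HO.ge g • (v : M), hVst g _ v.2⟩
          map_add' := fun v w => Subtype.ext (smul_add _ _ _)
          map_smul' := fun c v => Subtype.ext (ksmul_comm' c _ _) }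
      map_one' := by
        ext v
        exact ge_one_smul HO (v : M)
      map_mul' := fun g g' => by
        ext v
        exact (ge_smul_ge HO (v : M)).symm } with hρ
  have hρ_apply : ∀ (g : G) (v : ↥V), ((ρ g v : ↥V) : M) = HO.ge g • (v : M) :=
    fun g v => rfl
  have hsimpleRep : IsSimpleRep ρ := by
    refine ⟨hVnt, fun p hp => ?_⟩
    by_cases hpbot : p = ⊥
    · left; exact hpbot
    right
    have hmap : Gst (p.map V.subtype) := by
      rintro g m ⟨v, hvp, rfl⟩
      exact ⟨ρ g v, hp g v hvp, rfl⟩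
    have hne : p.map V.subtype ≠ ⊥ := by
      obtain ⟨v, hvp, hv0⟩ := (Submodule.ne_bot_iff p).mp hpbot
      refine (Submodule.ne_bot_iff _).mpr ⟨(v : M), ⟨v, hvp, rfl⟩, ?_⟩
      intro h
      exact hv0 (Subtype.ext h)
    have hle : p.map V.subtype ≤ V := by
      rintro m ⟨v, _, rfl⟩
      exact v.2
    have heq : p.map V.subtype = V := hmin _ hmap hne hle
    rw [eq_top_iff]
    intro v _
    have hvm : (v : M) ∈ p.map V.subtype := heq.symm ▸ v.2
    obtain ⟨w, hwp, hw⟩ := hvm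
    have hwv : w = v := Subtype.ext hw
    rwa [← hwv]
  -- the linear version of the `xbasis` map
  set F : (Fin s → ↥V) →ₗ[k] M :=
    { toFun := fun f => ∑ j : Fin s, HO.x ^ (j : ℕ) • ((f j : ↥V) : M)
      map_add' := fun f g => by
        simp only [Pi.add_apply, Submodule.coe_add, smul_add]
        rw [Finset.sum_add_distrib]
      map_smul' := fun c f => by
        simp only [Pi.smul_apply, SetLike.val_smul, RingHom.id_apply]
        rw [Finset.smul_sum]
        exact Finset.sum_congr rfl fun j _ => ksmul_comm' c _ _ } with hF
  have hF_apply : ∀ f : Fin s → ↥V,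
      F f = ∑ j : Fin s, HO.x ^ (j : ℕ) • ((f j : ↥V) : M) := fun f => rfl
  have hsingle : ∀ (r : Fin s) (v : ↥V), F (Pi.single r v) = HO.x ^ (r : ℕ) • (v : M) := by
    intro r v
    rw [hF_apply, Finset.sum_eq_single r]
    · rw [Pi.single_eq_same]
    · intro b _ hb
      rw [Pi.single_eq_of_ne hb, ZeroMemClass.coe_zero, smul_zero]
    · intro habs
      exact absurd (Finset.mem_univ r) habs
  -- injectivity
  have hFinj : Function.Injective F := by
    rw [← LinearMap.ker_eq_bot, eq_bot_iff]
    intro f hf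
    rw [LinearMap.mem_ker, hF_apply] at hf
    set w : Fin s → M := fun j => HO.x ^ (j : ℕ) • ((f j : ↥V) : M) with hw
    set μ : Fin s → k := fun j => ((χ a : kˣ) : k) ^ (j : ℕ) * lam with hμ
    have hwT : ∀ j ∈ (Finset.univ : Finset (Fin s)), Aop (w j) = μ j • w j := by
      intro j _
      rw [hw, hμ, hAop, geL_apply, ge_smul_xpow, hE _ (f j).2, ksmul_comm', smul_smul]
    have hμinj : Set.InjOn μ (Finset.univ : Finset (Fin s)) := by
      intro i _ j _ hij
      rw [hμ] at hij
      have h1 : ((χ a : kˣ) : k) ^ (i : ℕ) = ((χ a : kˣ) : k) ^ (j : ℕ) :=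
        mul_right_cancel₀ hlam0 hij
      have h2 : (χ a) ^ (i : ℕ) = (χ a) ^ (j : ℕ) := by
        apply Units.ext
        rw [Units.val_pow_eq_pow_val, Units.val_pow_eq_pow_val]
        exact h1
      have h3 : (i : ℕ) = (j : ℕ) := by
        refine pow_injOn_Iio_orderOf ?_ ?_ h2
        · rw [Set.mem_Iio, hqord]; exact i.2
        · rw [Set.mem_Iio, hqord]; exact j.2
      exact Fin.ext h3
    have hzero := eig_zero Aop Finset.univ μ w hμinj hwT hf
    funext j
    have hwj := hzero j (Finset.mem_univ j)
    rw [hw] at hwj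
    have : ((f j : ↥V) : M) = 0 := xpow_smul_inj HO s β hβ hs0 hxs (j : ℕ) hwj
    exact Subtype.ext this
  -- surjectivity
  have hFsurj : Function.Surjective F := by
    set N : Submodule k M := LinearMap.range F with hN
    have hmemN : ∀ (r : Fin s) (v : ↥V), HO.x ^ (r : ℕ) • (v : M) ∈ N := by
      intro r v
      exact ⟨Pi.single r v, hsingle r v⟩
    have hgen : ∀ (g : G) (i : ℕ), ∀ m ∈ N, (HO.ge g * HO.x ^ i) • m ∈ N := by
      rintro g i m ⟨f, rfl⟩
      rw [mul_smul, hF_apply, Finset.smul_sum, Finset.smul_sum]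
      refine Submodule.sum_mem N fun j _ => ?_
      have hterm : HO.ge g • HO.x ^ i • HO.x ^ (j : ℕ) • ((f j : ↥V) : M)
          = HO.ge g • HO.x ^ (i + (j : ℕ)) • ((f j : ↥V) : M) := by
        rw [pow_add, mul_smul]
      rw [hterm, xpow_reduce HO s β hxs (i + (j : ℕ)), ksmul_comm', ge_smul_xpow]
      refine N.smul_mem _ (N.smul_mem _ ?_)
      have hr : (i + (j : ℕ)) % s < s := Nat.mod_lt _ hs0
      have : HO.ge g • ((f j : ↥V) : M) = ((ρ g (f j) : ↥V) : M) := rfl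
      rw [this]
      exact hmemN ⟨(i + (j : ℕ)) % s, hr⟩ (ρ g (f j))
    have hNH : ∀ h : H, ∀ m ∈ N, h • m ∈ N := fun h => smul_mem_of_gen HO N hgen h
    set NH : Submodule H M :=
      { carrier := N
        add_mem' := fun hm hn => N.add_mem hm hn
        zero_mem' := N.zero_mem
        smul_mem' := fun h m hm => hNH h m hm } with hNHdef
    have hNHne : NH ≠ ⊥ := by
      obtain ⟨w, hwV, hw0⟩ := (Submodule.ne_bot_iff V).mp hVne
      have hwN : w ∈ NH := by
        have := hmemN (0 : Fin s) ⟨w, hwV⟩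
        have h' : w ∈ N := by simpa using this
        exact h'
      exact (Submodule.ne_bot_iff NH).mpr ⟨w, hwN, hw0⟩
    have hNHtop : NH = ⊤ := (hsimple.toIsSimpleOrder.2 NH).resolve_left hNHne
    intro m
    have hmN : m ∈ NH := by rw [hNHtop]; trivial
    exact hmN
  -- assemble the witness
  refine ⟨⟨↥V, ρ, inferInstance, hsimpleRep, V.subtype, ?_⟩⟩
  refine ⟨fun g v => rfl, hann, ?_⟩
  have hfn : (fun f : Fin s → ↥V => ∑ j : Fin s, HO.x ^ (j : ℕ) • V.subtype (f j)) = ⇑F :=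
    rfl
  rw [hfn]
  exact ⟨hFinj, hFsurj⟩


end HopfOrePaper
end

section
/- Assume kG is finite dimensional and semisimple and |q| = |χ| = s. Let β ∈ k^× and let M be a finite dimensional H-module with M = M^{(β)}, where M^{(β)} = {m ∈ M : (x^s − β)^r m = 0 for some integer r > 0}. Then rad(M) = (x^s − β)M. -/
open scoped TensorProduct

namespace HopfOrePaper

variable {k G H : Type} [Field k] [Group G] [Ring H] [Algebra k H] {χ : G →* kˣ}

section Aux
variable {k H M : Type} [Field k] [Ring H] [Algebra k H]
  [AddCommGroup M] [Module k M] [Module H M] [IsScalarTower k H M]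

theorem aux_smul_comm_s11 (h : H) (α : k) (m : M) : h • α • m = α • h • m := by
  rw [← algebraMap_smul H α m, ← mul_smul, ← Algebra.commutes, mul_smul, algebraMap_smul]

/-- action of `h : H` on `M` as a `k`-linear endomorphism. -/
def actL (k : Type) {H M : Type} [Field k] [Ring H] [Algebra k H]
    [AddCommGroup M] [Module k M] [Module H M] [IsScalarTower k H M] (h : H) :
    Module.End k M where
  toFun m := h • m
  map_add' := smul_add h
  map_smul' α m := aux_smul_comm_s11 h α m

@[simp] theorem actL_apply (h : H) (m : M) : actL k h m = h • m := rfl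

theorem actL_mul (h₁ h₂ : H) : actL k (M := M) (h₁ * h₂) = actL k h₁ * actL k h₂ := by
  ext m; simp [mul_smul]

theorem actL_pow (h : H) (i : ℕ) : actL k (M := M) (h ^ i) = (actL k h) ^ i := by
  induction i with
  | zero => ext m; simp
  | succ n ih => rw [pow_succ, actL_mul, ih, pow_succ]

end Aux

theorem maschke_complement {k G H : Type} [Field k] [Group G]
    [Ring H] [Algebra k H] {χ : G →* kˣ}
    (hss : IsSemisimpleRing (MonoidAlgebra k G))
    (s : ℕ) (hs : 1 < s) (hχs : ∀ g : G, (χ g) ^ s = 1) (hsk : (s : k) ≠ 0)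
    (HO : HopfOre k G H χ)
    (N : Type) [AddCommGroup N] [Module k N] [Module H N] [IsScalarTower k H N]
    (β : k) (hβ : β ≠ 0)
    (hcN : ∀ n : N, (HO.x ^ s - algebraMap k H β) • n = 0)
    (P : Submodule H N) : ∃ C : Submodule H N, IsCompl P C := by
  classical
  have hspred : s - 1 + 1 = s := by omega
  have hxs : ∀ n : N, (HO.x ^ s) • n = β • n := by
    intro n
    have h1 := hcN n
    rw [sub_smul, sub_eq_zero] at h1
    rw [h1, algebraMap_smul]
  -- the commutation rule in H, powered up
  have hxig : ∀ (i : ℕ) (g : G), HO.x ^ i * HO.emb (MonoidAlgebra.of k G g)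
      = ((((χ g)⁻¹ : kˣ) : k)) ^ i • (HO.emb (MonoidAlgebra.of k G g) * HO.x ^ i) := by
    intro i g
    induction i with
    | zero => simp
    | succ j ih =>
      rw [pow_succ HO.x j, mul_assoc, HO.comm_rel g, mul_smul_comm, ← mul_assoc, ih,
        smul_mul_assoc, mul_assoc, smul_smul, pow_succ]
      congr 1
      ring
  -- the inverse operator Z of the action Y of x
  set Zop : Module.End k N := β⁻¹ • actL k (HO.x ^ (s - 1)) with hZdef
  have hZapp : ∀ n : N, Zop n = β⁻¹ • (HO.x ^ (s-1)) • n := by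
    intro n; rw [hZdef]; rfl
  have hZY : ∀ n : N, Zop (HO.x • n) = n := by
    intro n
    rw [hZapp, ← mul_smul, ← pow_succ, hspred, hxs, smul_smul, inv_mul_cancel₀ hβ, one_smul]
  have hYZ : ∀ n : N, HO.x • Zop n = n := by
    intro n
    rw [hZapp, aux_smul_comm_s11, ← mul_smul, ← pow_succ', hspred, hxs, smul_smul,
      inv_mul_cancel₀ hβ, one_smul]
  have hZpow : ∀ (j : ℕ) (n : N), (Zop ^ (j+1)) n = (Zop ^ j) (Zop n) := by
    intro j n; rw [pow_succ, Module.End.mul_apply]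
  have hZYi : ∀ (j : ℕ) (n : N), (Zop ^ j) ((HO.x ^ j) • n) = n := by
    intro j
    induction j with
    | zero => intro n; simp
    | succ i ih =>
      intro n
      rw [hZpow, pow_succ', mul_smul, hZY, ih]
  have hYZi : ∀ (j : ℕ) (n : N), (HO.x ^ j) • ((Zop ^ j) n) = n := by
    intro j
    induction j with
    | zero => intro n; simp
    | succ i ih =>
      intro n
      rw [pow_succ' HO.x i, mul_smul, pow_succ, Module.End.mul_apply, ih, hYZ]
  have hZs : ∀ n : N, (Zop ^ (s-1)) n = β⁻¹ • ((HO.x) • n) := by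
    intro n
    have h1 : (Zop ^ (s-1)) ((HO.x ^ (s-1)) • (β⁻¹ • HO.x • n)) = β⁻¹ • HO.x • n :=
      hZYi (s-1) _
    have h2 : (HO.x ^ (s-1)) • (β⁻¹ • HO.x • n) = n := by
      rw [aux_smul_comm_s11, ← mul_smul, ← pow_succ, hspred, hxs, smul_smul,
        inv_mul_cancel₀ hβ, one_smul]
    rw [h2] at h1
    exact h1
  -- commutation of Z with the G-action
  have hZg : ∀ (g : G) (n : N), Zop (HO.emb (MonoidAlgebra.of k G g) • n)
      = ((χ g : kˣ) : k) • (HO.emb (MonoidAlgebra.of k G g) • Zop n) := by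
    intro g n
    have hu : ((((χ g)⁻¹ : kˣ) : k)) ^ (s-1) = ((χ g : kˣ) : k) := by
      have h1 : ((χ g)⁻¹ : kˣ) ^ (s-1) = χ g := by
        have h2 : ((χ g)⁻¹ : kˣ) ^ (s-1) * ((χ g)⁻¹ : kˣ) = 1 := by
          rw [← pow_succ, hspred, inv_pow, hχs, inv_one]
        rw [mul_inv_eq_one] at h2
        exact h2
      calc ((((χ g)⁻¹ : kˣ) : k)) ^ (s-1) = ((((χ g)⁻¹ ^ (s-1) : kˣ)) : k) := by
            rw [Units.val_pow_eq_pow_val]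
      _ = ((χ g : kˣ) : k) := by rw [h1]
    rw [hZapp, hZapp, ← mul_smul, hxig (s-1) g, hu, smul_assoc, mul_smul,
      aux_smul_comm_s11 (HO.emb (MonoidAlgebra.of k G g)) β⁻¹, smul_comm β⁻¹]
  have hZig : ∀ (i : ℕ) (g : G) (n : N), (Zop ^ i) (HO.emb (MonoidAlgebra.of k G g) • n)
      = (((χ g : kˣ) : k)) ^ i • (HO.emb (MonoidAlgebra.of k G g) • (Zop ^ i) n) := by
    intro i
    induction i with
    | zero => intro g n; simp
    | succ j ih =>
      intro g n
      rw [hZpow, hZg, map_smul, ih, hZpow, smul_smul, ← pow_succ']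
  -- the kG-module structure and Maschke projection
  letI : Module (MonoidAlgebra k G) N := Module.compHom N HO.emb.toRingHom
  haveI := hss
  haveI hN : IsSemisimpleModule (MonoidAlgebra k G) N := inferInstance
  set P' : Submodule (MonoidAlgebra k G) N :=
    { carrier := P
      add_mem' := fun h1 h2 => P.add_mem h1 h2
      zero_mem' := P.zero_mem
      smul_mem' := fun z {n} hn => P.smul_mem (HO.emb z) hn } with hP'
  obtain ⟨C', hC'⟩ := exists_isCompl P'
  set π0 := Submodule.linearProjOfIsCompl P' C' hC' with hπ0
  have hksmul : ∀ (α : k) (n : N), (algebraMap k (MonoidAlgebra k G) α) • n = α • n := by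
    intro α n
    show HO.emb.toRingHom (algebraMap k (MonoidAlgebra k G) α) • n = α • n
    have h1 : HO.emb.toRingHom (algebraMap k (MonoidAlgebra k G) α) = algebraMap k H α :=
      HO.emb.commutes α
    rw [h1, algebraMap_smul]
  set π : Module.End k N :=
    { toFun := fun n => (π0 n : N)
      map_add' := fun m n => by
        show ((π0 (m + n) : N)) = ((π0 m : N)) + ((π0 n : N))
        rw [map_add]; rfl
      map_smul' := fun α n => by
        simp only [RingHom.id_apply]
        rw [← hksmul, map_smul, Submodule.coe_smul, hksmul] } with hπdef
  have hπmem : ∀ n : N, π n ∈ P := fun n => (π0 n).2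
  have hπid : ∀ n ∈ P, π n = n := by
    intro n hn
    have h1 := Submodule.linearProjOfIsCompl_apply_left hC' ⟨n, hn⟩
    exact congrArg Subtype.val h1
  have hπg : ∀ (g : G) (n : N), π (HO.emb (MonoidAlgebra.of k G g) • n)
      = HO.emb (MonoidAlgebra.of k G g) • π n := by
    intro g n
    have h1 := map_smul π0 (MonoidAlgebra.of k G g) n
    calc π (HO.emb (MonoidAlgebra.of k G g) • n)
        = ((π0 ((MonoidAlgebra.of k G g) • n) : N)) := rfl
    _ = (((MonoidAlgebra.of k G g) • π0 n : P') : N) := by rw [h1]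
    _ = HO.emb (MonoidAlgebra.of k G g) • (π0 n : N) := rfl
  -- the averaged projection
  set π' : Module.End k N := ∑ i ∈ Finset.range s, (actL k (HO.x ^ i)) * π * (Zop ^ i)
    with hπ'
  have hπ'app : ∀ n : N, π' n = ∑ i ∈ Finset.range s, (HO.x ^ i) • π ((Zop ^ i) n) := by
    intro n
    rw [hπ', LinearMap.sum_apply]
    exact Finset.sum_congr rfl fun i _ => by rw [Module.End.mul_apply, Module.End.mul_apply,
      actL_apply]
  have hkmem : ∀ (α : k) {q : N}, q ∈ P → α • q ∈ P := by
    intro α q hq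
    rw [← algebraMap_smul H α q]
    exact P.smul_mem _ hq
  have hπ'mem : ∀ n : N, π' n ∈ P := by
    intro n
    rw [hπ'app]
    exact Submodule.sum_mem P fun i _ => P.smul_mem _ (hπmem _)
  have hZmem : ∀ n ∈ P, Zop n ∈ P := by
    intro n hn
    rw [hZapp]
    exact hkmem _ (P.smul_mem _ hn)
  have hZimem : ∀ (i : ℕ) (n : N), n ∈ P → (Zop ^ i) n ∈ P := by
    intro i
    induction i with
    | zero => intro n hn; simpa using hn
    | succ j ih =>
      intro n hn
      rw [hZpow]
      exact ih _ (hZmem n hn)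
  have hπ'id : ∀ n ∈ P, π' n = (s : k) • n := by
    intro n hn
    rw [hπ'app]
    have h1 : ∀ i ∈ Finset.range s, (HO.x ^ i) • π ((Zop ^ i) n) = n := by
      intro i _
      rw [hπid _ (hZimem i n hn), hYZi]
    rw [Finset.sum_congr rfl h1, Finset.sum_const, Finset.card_range]
    exact (Nat.cast_smul_eq_nsmul k s n).symm
  have hπ'g : ∀ (g : G) (n : N), π' (HO.emb (MonoidAlgebra.of k G g) • n)
      = HO.emb (MonoidAlgebra.of k G g) • π' n := by
    intro g n
    rw [hπ'app, hπ'app, Finset.smul_sum]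
    refine Finset.sum_congr rfl fun i _ => ?_
    have hcu : (((χ g : kˣ) : k)) ^ i * ((((χ g)⁻¹ : kˣ) : k)) ^ i = 1 := by
      rw [← mul_pow, ← Units.val_mul, mul_inv_cancel, Units.val_one, one_pow]
    rw [hZig i g n, map_smul, hπg g, aux_smul_comm_s11, ← mul_smul, hxig i g, smul_assoc,
      smul_smul, hcu, one_smul, mul_smul]
  have hπ'x : ∀ n : N, π' (HO.x • n) = HO.x • π' n := by
    intro n
    have hst : s = (s - 1) + 1 := by omega
    rw [hπ'app, hπ'app, Finset.smul_sum, hst]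
    rw [Finset.sum_range_succ' (fun i => (HO.x ^ i) • π ((Zop ^ i) (HO.x • n))) (s-1)]
    rw [Finset.sum_range_succ (fun i => HO.x • ((HO.x ^ i) • π ((Zop ^ i) n))) (s-1)]
    have h1 : ∀ j ∈ Finset.range (s-1), (HO.x ^ (j+1)) • π ((Zop ^ (j+1)) (HO.x • n))
        = HO.x • ((HO.x ^ j) • π ((Zop ^ j) n)) := by
      intro j _
      rw [hZpow, hZY, ← mul_smul, ← pow_succ']
    have h2 : (HO.x ^ 0) • π ((Zop ^ 0) (HO.x • n))
        = HO.x • ((HO.x ^ (s-1)) • π ((Zop ^ (s-1)) n)) := by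
      simp only [pow_zero, Module.End.one_apply, one_smul]
      rw [hZs n, LinearMap.map_smul π β⁻¹ (HO.x • n), aux_smul_comm_s11 (HO.x ^ (s-1)) β⁻¹, aux_smul_comm_s11 HO.x β⁻¹,
        ← mul_smul, ← pow_succ', hspred, hxs, smul_smul, inv_mul_cancel₀ hβ, one_smul]
    rw [Finset.sum_congr rfl h1, h2]
  -- the final projection
  set f : Module.End k N := ((s : k))⁻¹ • π' with hf
  have hfapp : ∀ n : N, f n = (s : k)⁻¹ • π' n := fun n => rfl
  have hfmem : ∀ n : N, f n ∈ P := fun n => hkmem _ (hπ'mem n)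
  have hfid : ∀ n ∈ P, f n = n := by
    intro n hn
    rw [hfapp, hπ'id n hn, smul_smul, inv_mul_cancel₀ hsk, one_smul]
  have hfg : ∀ (g : G) (n : N), f (HO.emb (MonoidAlgebra.of k G g) • n)
      = HO.emb (MonoidAlgebra.of k G g) • f n := by
    intro g n
    rw [hfapp, hfapp, hπ'g, aux_smul_comm_s11]
  have hfx : ∀ n : N, f (HO.x • n) = HO.x • f n := by
    intro n
    rw [hfapp, hfapp, hπ'x, aux_smul_comm_s11]
  have hfxi : ∀ (i : ℕ) (n : N), f ((HO.x ^ i) • n) = (HO.x ^ i) • f n := by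
    intro i
    induction i with
    | zero => intro n; simp
    | succ j ih =>
      intro n
      rw [pow_succ', mul_smul, hfx, ih, ← mul_smul, ← pow_succ']
  have hfH : ∀ (h : H) (n : N), f (h • n) = h • f n := by
    intro h n
    have hh : h ∈ Submodule.span k (Set.range fun p : G × ℕ =>
        HO.emb (MonoidAlgebra.of k G p.1) * HO.x ^ p.2) := by
      rw [HO.basis_span]; trivial
    induction hh using Submodule.span_induction with
    | mem z hz =>
      obtain ⟨⟨g, i⟩, rfl⟩ := hz
      rw [mul_smul, hfg, hfxi, mul_smul]
    | zero => rw [zero_smul, map_zero, zero_smul]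
    | add h₁ h₂ _ _ ih₁ ih₂ => rw [add_smul, map_add, ih₁, ih₂, add_smul]
    | smul α h' _ ih => rw [smul_assoc, map_smul, ih, ← smul_assoc]
  set F : N →ₗ[H] N :=
    { toFun := f
      map_add' := map_add f
      map_smul' := hfH } with hF
  have hproj : LinearMap.IsProj P F := ⟨hfmem, hfid⟩
  exact ⟨LinearMap.ker F, hproj.isCompl⟩

theorem aux_cast_ne_zero {k : Type} [Field k] (u : kˣ) (s : ℕ) (hs : 1 < s)
    (hord : orderOf u = s) : (s : k) ≠ 0 := by
  intro h0
  set p := ringChar k with hp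
  have hdvd : p ∣ s := (CharP.cast_eq_zero_iff k p s).mp h0
  rcases CharP.char_is_prime_or_zero k p with hprime | hzero
  · haveI : Fact p.Prime := ⟨hprime⟩
    haveI : CharP k p := ringChar.charP k
    set v := u ^ (s / p) with hv
    have hps : 0 < p := hprime.pos
    have hsp : s / p ∣ s := Nat.div_dvd_of_dvd hdvd
    have hspos : 0 < s := by omega
    have hordv : orderOf v = p := by
      have hsp' : s / p ∣ orderOf u := by rw [hord]; exact hsp
      rw [hv, orderOf_pow_of_dvd (Nat.div_pos (Nat.le_of_dvd hspos hdvd) hps).ne' hsp', hord, Nat.div_div_self hdvd (by omega)]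
    have hvp : (v : k) ^ p = 1 := by
      have h1 : v ^ p = 1 := by rw [← hordv]; exact pow_orderOf_eq_one v
      calc (v : k) ^ p = ((v ^ p : kˣ) : k) := by push_cast; ring
      _ = 1 := by rw [h1]; rfl
    have hfrob : frobenius k p (v : k) = frobenius k p 1 := by
      simp [frobenius_def, hvp]
    have hv1 : (v : k) = 1 := frobenius_inj k p hfrob
    have : v = 1 := Units.ext hv1
    rw [this, orderOf_one] at hordv
    have := hprime.one_lt
    omega
  · rw [hzero] at hdvd
    omega

/-- **Lemma 4.9.** Assume `kG` is finite-dimensional and semisimple and `|q| = |χ| = s`.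
Let `β ∈ k^×` and let `M` be a finite-dimensional `H`-module with `M = M^{(β)}`,
i.e. every `m ∈ M` is annihilated by some power of `x^s - β`.
Then `rad(M) = (x^s - β)M`. -/
theorem stmt_11 {k G H : Type} [Field k] [IsAlgClosed k] [Group G] [Finite G]
    [Ring H] [Algebra k H]
    {χ : G →* kˣ} (a : G) (ha : a ∈ Subgroup.center G) (hχa : χ a ≠ 1)
    (hss : IsSemisimpleRing (MonoidAlgebra k G))
    (s : ℕ) (hs : 1 < s) (hχord : orderOf χ = s) (hqord : orderOf (χ a) = s)
    (HO : HopfOre k G H χ)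
    (M : Type) [AddCommGroup M] [Module k M] [Module H M] [IsScalarTower k H M]
    [FiniteDimensional k M]
    (β : k) (hβ : β ≠ 0)
    (hM : ∀ m : M, ∃ r : ℕ, 0 < r ∧ ((HO.x ^ s - algebraMap k H β) ^ r) • m = 0) :
    modRadical H M = smulRange (M := M) H (HO.x ^ s - algebraMap k H β) := by
  classical
  set c : H := HO.x ^ s - algebraMap k H β with hcdef
  have hχsU : ∀ g : G, (χ g) ^ s = 1 := by
    intro g
    have h1 : χ ^ s = 1 := by rw [← hχord]; exact pow_orderOf_eq_one χ
    calc (χ g) ^ s = (χ ^ s) g := rfl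
    _ = 1 := by rw [h1]; rfl
  have hsk : (s : k) ≠ 0 := aux_cast_ne_zero (χ a) s hs hqord
  have hxig : ∀ (i : ℕ) (g : G), HO.x ^ i * HO.emb (MonoidAlgebra.of k G g)
      = ((((χ g)⁻¹ : kˣ) : k)) ^ i • (HO.emb (MonoidAlgebra.of k G g) * HO.x ^ i) := by
    intro i g
    induction i with
    | zero => simp
    | succ j ih =>
      rw [pow_succ HO.x j, mul_assoc, HO.comm_rel g, mul_smul_comm, ← mul_assoc, ih,
        smul_mul_assoc, mul_assoc, smul_smul, pow_succ]
      congr 1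
      ring
  have hxsg : ∀ g : G, HO.x ^ s * HO.emb (MonoidAlgebra.of k G g)
      = HO.emb (MonoidAlgebra.of k G g) * HO.x ^ s := by
    intro g
    rw [hxig s g]
    have h1 : ((((χ g)⁻¹ : kˣ) : k)) ^ s = 1 := by
      rw [← Units.val_pow_eq_pow_val, inv_pow, hχsU, inv_one, Units.val_one]
    rw [h1, one_smul]
  have hcentral : ∀ h : H, c * h = h * c := by
    intro h
    have hh : h ∈ Submodule.span k (Set.range fun p : G × ℕ =>
        HO.emb (MonoidAlgebra.of k G p.1) * HO.x ^ p.2) := by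
      rw [HO.basis_span]; trivial
    induction hh using Submodule.span_induction with
    | mem z hz =>
      obtain ⟨⟨g, i⟩, rfl⟩ := hz
      rw [hcdef, sub_mul, mul_sub]
      congr 1
      · rw [← mul_assoc, hxsg, mul_assoc, pow_mul_comm, ← mul_assoc]
      · rw [Algebra.commutes]
    | zero => rw [mul_zero, zero_mul]
    | add h₁ h₂ _ _ ih₁ ih₂ => rw [mul_add, add_mul, ih₁, ih₂]
    | smul α h' _ ih => rw [mul_smul_comm, smul_mul_assoc, ih]
  set γ : M →ₗ[H] M :=
    { toFun := fun m => c • m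
      map_add' := smul_add c
      map_smul' := fun h m => by
        simp only [RingHom.id_apply]
        rw [← mul_smul, hcentral, mul_smul] } with hγ
  have hγapp : ∀ m : M, γ m = c • m := fun m => rfl
  have hrange : smulRange (M := M) H c = LinearMap.range γ := by
    unfold smulRange
    have h1 : (Set.range fun m : M => c • m) = ↑(LinearMap.range γ) := by
      rw [LinearMap.coe_range]; rfl
    rw [h1, Submodule.span_eq]
  obtain ⟨r, hr⟩ : ∃ r : ℕ, ∀ m : M, c ^ r • m = 0 := by
    obtain ⟨n, fgen, hfgen⟩ := Module.Finite.exists_fin (R := k) (M := M)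
    choose rr hrpos hrzero using fun i => hM (fgen i)
    refine ⟨Finset.univ.sup rr, fun m => ?_⟩
    have hm' : m ∈ Submodule.span k (Set.range fgen) := by rw [hfgen]; trivial
    induction hm' using Submodule.span_induction with
    | mem z hz =>
      obtain ⟨i, rfl⟩ := hz
      have hle : rr i ≤ Finset.univ.sup rr := Finset.le_sup (Finset.mem_univ i)
      rw [show Finset.univ.sup rr = (Finset.univ.sup rr - rr i) + rr i by omega,
        pow_add, mul_smul, hrzero i, smul_zero]
    | zero => rw [smul_zero]
    | add m₁ m₂ _ _ ih₁ ih₂ => rw [smul_add, ih₁, ih₂, add_zero]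
    | smul α m' _ ih => rw [aux_smul_comm_s11, ih, smul_zero]
  -- easy inclusion : cM ≤ rad M
  have heasy : smulRange (M := M) H c ≤ modRadical H M := by
    rw [hrange]
    refine le_sInf fun p hp => ?_
    by_contra hnot
    have hsup : p ⊔ LinearMap.range γ = ⊤ := hp.2 _ (left_lt_sup.2 hnot)
    have hmapp : Submodule.map γ p ≤ p := by
      rintro _ ⟨m, hm, rfl⟩
      exact p.smul_mem c hm
    have hstep : ∀ j : ℕ, LinearMap.range γ ≤ p ⊔ LinearMap.range (γ ^ (j+1)) := by
      intro j
      induction j with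
      | zero => rw [pow_one]; exact le_sup_right
      | succ i ih =>
        have h1 : LinearMap.range γ = Submodule.map γ ⊤ := (Submodule.map_top γ).symm
        rw [h1, ← hsup, Submodule.map_sup]
        refine sup_le (le_trans hmapp le_sup_left) ?_
        have h2 : Submodule.map γ (LinearMap.range γ)
            ≤ Submodule.map γ (p ⊔ LinearMap.range (γ ^ (i+1))) := Submodule.map_mono ih
        rw [Submodule.map_sup] at h2
        have h3 : Submodule.map γ (LinearMap.range (γ ^ (i+1)))
            = LinearMap.range (γ ^ (i+2)) := by
          rw [show γ ^ (i+2) = γ * γ ^ (i+1) from (pow_succ' γ (i+1)),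
            Module.End.mul_eq_comp, LinearMap.range_comp]
        rw [h3] at h2
        exact le_trans h2 (sup_le (le_trans hmapp le_sup_left) le_sup_right)
    have hγpow : ∀ (j : ℕ) (m : M), (γ ^ j) m = c ^ j • m := by
      intro j
      induction j with
      | zero => intro m; simp
      | succ i ih =>
        intro m
        rw [pow_succ γ i, Module.End.mul_apply, hγapp, ih, ← mul_smul, ← pow_succ]
    have hzero : LinearMap.range (γ ^ (r+1)) = ⊥ := by
      rw [LinearMap.range_eq_bot]
      ext m
      rw [hγpow, show c ^ (r+1) = c * c ^ r from pow_succ' c r, mul_smul, hr, smul_zero]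
      rfl
    have := hstep r
    rw [hzero, sup_bot_eq] at this
    exact hnot this
  -- hard inclusion : rad M ≤ cM
  have hhard : modRadical H M ≤ smulRange (M := M) H c := by
    rw [hrange]
    set cM : Submodule H M := LinearMap.range γ with hcM
    have hcQ : ∀ q : M ⧸ cM, c • q = 0 := by
      intro q
      obtain ⟨m, rfl⟩ := Submodule.Quotient.mk_surjective cM q
      rw [← Submodule.Quotient.mk_smul, Submodule.Quotient.mk_eq_zero]
      exact ⟨m, rfl⟩
    haveI : IsNoetherian k (M ⧸ cM) :=
      isNoetherian_of_surjective ((cM.mkQ).restrictScalars k)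
        (LinearMap.range_eq_top.2 (Submodule.mkQ_surjective cM))
    haveI : IsNoetherian H (M ⧸ cM) := isNoetherian_of_tower k ‹IsNoetherian k (M ⧸ cM)›
    haveI : IsCoatomic (Submodule H (M ⧸ cM)) := inferInstance
    have hcompl : ∀ P : Submodule H (M ⧸ cM), ∃ C, IsCompl P C := fun P =>
      maschke_complement hss s hs hχsU hsk HO (M ⧸ cM) β hβ (fun q => hcdef ▸ hcQ q) P
    have hjac : sInf {p : Submodule H (M ⧸ cM) | IsCoatom p} = ⊥ := by
      by_contra hne
      obtain ⟨C, hC⟩ := hcompl (sInf {p : Submodule H (M ⧸ cM) | IsCoatom p})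
      rcases eq_or_ne C ⊤ with hCtop | hCtop
      · rw [hCtop] at hC
        exact hne (disjoint_top.1 hC.disjoint)
      · obtain ⟨p, hp, hCp⟩ := (IsCoatomic.eq_top_or_exists_le_coatom C).resolve_left hCtop
        have h1 : sInf {p : Submodule H (M ⧸ cM) | IsCoatom p} ≤ p := sInf_le hp
        have h2 : (⊤ : Submodule H (M ⧸ cM)) ≤ p := by
          rw [← hC.sup_eq_top]
          exact sup_le h1 hCp
        exact hp.1 (top_le_iff.1 h2)
    have hco : ∀ p' : Submodule H (M ⧸ cM), IsCoatom p' →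
        IsCoatom (Submodule.comap cM.mkQ p') := by
      intro p' hp'
      letI : OrderTop {p'' : Submodule H M // cM ≤ p''} :=
        { top := ⟨⊤, le_top⟩
          le_top := fun x => (by exact le_top : x.val ≤ (⊤ : Submodule H M)) }
      have h1 : IsCoatom ((Submodule.comapMkQRelIso cM) p') :=
        (OrderIso.isCoatom_iff (Submodule.comapMkQRelIso cM) p').2 hp'
      constructor
      · intro htop
        exact h1.1 (Subtype.ext htop)
      · intro b hb
        have hcMb : cM ≤ b := le_trans (Submodule.le_comap_mkQ cM p') hb.le
        have h2 : ((Submodule.comapMkQRelIso cM) p') < ⟨b, hcMb⟩ := Subtype.mk_lt_mk.2 hb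
        exact congrArg Subtype.val (h1.2 _ h2)
    intro m hm
    have hmm : ∀ p ∈ {p : Submodule H M | IsCoatom p}, m ∈ p := Submodule.mem_sInf.1 hm
    have hall : cM.mkQ m ∈ sInf {p : Submodule H (M ⧸ cM) | IsCoatom p} :=
      Submodule.mem_sInf.2 fun p' hp' => hmm _ (hco p' hp')
    rw [hjac, Submodule.mem_bot] at hall
    have : m ∈ LinearMap.ker cM.mkQ := hall
    rwa [Submodule.ker_mkQ] at this
  exact le_antisymm hhard heasy


end HopfOrePaper
end

section
/- Assume kG is finite dimensional and semisimple and |q| = |χ| = s. Let i, j ∈ I, α, β ∈ k^× and r, t ≥ 1. Then V_r(i,α) ≅ V_t(j,β) as H-modules if and only if r = t, α = β and [i] = [j]. -/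
open scoped TensorProduct

namespace HopfOrePaper

variable {k G H : Type} [Field k] [Group G] [Ring H] [Algebra k H] {χ : G →* kˣ}

section Aux

variable {k G H : Type} [Field k] [Group G] [Ring H] [Algebra k H] {χ : G →* kˣ}

lemma hsmul_comm {W : Type} [AddCommGroup W] [Module k W] [Module H W]
    [IsScalarTower k H W] (c : k) (h : H) (w : W) : h • (c • w) = c • (h • w) := by
  rw [← algebraMap_smul H c w, ← mul_smul, ← Algebra.commutes, mul_smul, algebraMap_smul]

lemma emb_mul_x (HO : HopfOre k G H χ) (g : G) :
    HO.emb (MonoidAlgebra.of k G g) * HO.x = ((χ g : kˣ) : k) • (HO.x * HO.emb (MonoidAlgebra.of k G g)) := by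
  rw [HO.comm_rel g, smul_smul]
  norm_num

lemma emb_mul_xpow (HO : HopfOre k G H χ) (g : G) (i : ℕ) :
    HO.emb (MonoidAlgebra.of k G g) * HO.x ^ i
      = (((χ g : kˣ) : k) ^ i) • (HO.x ^ i * HO.emb (MonoidAlgebra.of k G g)) := by
  induction i with
  | zero => simp
  | succ n ih =>
      rw [pow_succ, ← mul_assoc, ih, smul_mul_assoc, mul_assoc, emb_mul_x HO g,
        mul_smul_comm, smul_smul, pow_succ]
      rw [mul_assoc]

lemma sub_pow_expand (x : H) (α : k) (s n : ℕ) :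
    (x ^ s - algebraMap k H α) ^ n
      = ∑ i ∈ Finset.range (n + 1), (((-α) ^ (n - i) * (n.choose i : k)) • x ^ (s * i)) := by
  have hc0 : Commute (x ^ s) (algebraMap k H α) := (Algebra.commutes α (x ^ s)).symm
  have hc : Commute (x ^ s) (-(algebraMap k H α)) := hc0.neg_right
  rw [sub_eq_add_neg, hc.add_pow]
  refine Finset.sum_congr rfl fun i _ => ?_
  rw [← map_neg, ← map_pow, ← pow_mul]
  rw [show ((n.choose i : H)) = algebraMap k H ((n.choose i : k)) by push_cast; ring,
    ← Algebra.commutes ((-α) ^ (n - i))]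
  rw [mul_assoc, ← Algebra.commutes ((n.choose i : k)) (x ^ (s * i)), ← mul_assoc, ← map_mul,
    ← Algebra.smul_def]

end Aux
section Aux2

variable {k G H : Type} [Field k] [Group G] [Ring H] [Algebra k H] {χ : G →* kˣ}
variable {V W : Type} [AddCommGroup V] [Module k V]
  [AddCommGroup W] [Module k W] [Module H W] [IsScalarTower k H W]

lemma act_g_xpow (HO : HopfOre k G H χ) (g : G) (i : ℕ) (w : W) :
    HO.emb (MonoidAlgebra.of k G g) • (HO.x ^ i • w)
      = ((χ g : kˣ) : k) ^ i • (HO.x ^ i • (HO.emb (MonoidAlgebra.of k G g) • w)) := by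
  rw [← mul_smul, emb_mul_xpow, smul_assoc, mul_smul]

/-- The basis map `(Fin d → V) → W`, as a linear map. -/
def bmap (HO : HopfOre k G H χ) (e : V →ₗ[k] W) (d : ℕ) : (Fin d → V) →ₗ[k] W where
  toFun f := ∑ j : Fin d, HO.x ^ (j : ℕ) • e (f j)
  map_add' f g := by
    rw [← Finset.sum_add_distrib]
    refine Finset.sum_congr rfl fun j _ => ?_
    rw [Pi.add_apply, map_add, smul_add]
  map_smul' a f := by
    simp only [RingHom.id_apply, Finset.smul_sum, Pi.smul_apply, map_smul]
    exact Finset.sum_congr rfl fun j _ => hsmul_comm a _ _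

lemma bmap_apply (HO : HopfOre k G H χ) (e : V →ₗ[k] W) (d : ℕ) (f : Fin d → V) :
    bmap HO e d f = ∑ j : Fin d, HO.x ^ (j : ℕ) • e (f j) := rfl

lemma bmap_single (HO : HopfOre k G H χ) (e : V →ₗ[k] W) {d : ℕ} (m : Fin d) (v : V) :
    bmap HO e d (Pi.single m v) = HO.x ^ (m : ℕ) • e v := by
  rw [bmap_apply, Finset.sum_eq_single m]
  · rw [Pi.single_eq_same]
  · intro b _ hb
    rw [Pi.single_eq_of_ne hb, map_zero, smul_zero]
  · intro h; exact absurd (Finset.mem_univ m) h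

variable {ρ : Representation k G V} {e : V →ₗ[k] W} {c : H} {d : ℕ} {HO : HopfOre k G H χ}

/-- The basis map as a linear equivalence. -/
noncomputable def bequiv (hq : IsStdQuot HO ρ e c d) : (Fin d → V) ≃ₗ[k] W :=
  LinearEquiv.ofBijective (bmap HO e d) hq.xbasis

lemma bequiv_apply (hq : IsStdQuot HO ρ e c d) (f : Fin d → V) :
    bequiv hq f = ∑ j : Fin d, HO.x ^ (j : ℕ) • e (f j) := rfl

lemma e_injective (hq : IsStdQuot HO ρ e c d) (hd : 0 < d) : Function.Injective e := by
  intro v v' hvv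
  have h2 : bequiv hq (Pi.single (⟨0, hd⟩ : Fin d) v) = bequiv hq (Pi.single ⟨0, hd⟩ v') := by
    show bmap HO e d _ = bmap HO e d _
    rw [bmap_single, bmap_single, hvv]
  have := (bequiv hq).injective h2
  have := congr_fun this ⟨0, hd⟩
  rwa [Pi.single_eq_same, Pi.single_eq_same] at this

lemma e_pow_smul_eq (hq : IsStdQuot HO ρ e c d) (m : Fin d) (v : V) :
    HO.x ^ (m : ℕ) • e v = bequiv hq (Pi.single m v) := (bmap_single HO e m v).symm

/-- The key overflow relation: from `(x^s - α)^r • w = 0` we can rewrite `x^(s*r) • w`. -/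
lemma rel_overflow {s r : ℕ} {α : k}
    (hq : IsStdQuot HO ρ e ((HO.x ^ s - algebraMap k H α) ^ r) d) (w : W) :
    HO.x ^ (s * r) • w
      = ∑ i ∈ Finset.range r, (-((-α) ^ (r - i) * (r.choose i : k))) • (HO.x ^ (s * i) • w) := by
  have h0 := hq.ann w
  rw [sub_pow_expand, Finset.sum_smul, Finset.sum_range_succ] at h0
  simp only [smul_assoc, Nat.sub_self, pow_zero, Nat.choose_self, Nat.cast_one, mul_one,
    one_smul] at h0
  rw [eq_neg_of_add_eq_zero_right h0, ← Finset.sum_neg_distrib]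
  exact Finset.sum_congr rfl fun i _ => (neg_smul _ _).symm

end Aux2
section Aux3

variable {k G H : Type} [Field k] [Group G] [Ring H] [Algebra k H] {χ : G →* kˣ}
variable {V W W' : Type} [AddCommGroup V] [Module k V]
  [AddCommGroup W] [Module k W] [Module H W] [IsScalarTower k H W]
  [AddCommGroup W'] [Module k W'] [Module H W'] [IsScalarTower k H W']
variable {ρ : Representation k G V} {e : V →ₗ[k] W} {c : H} {d : ℕ} {HO : HopfOre k G H χ}

lemma act_g_e (hq : IsStdQuot HO ρ e c d) (g : G) (i : ℕ) (v : V) :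
    HO.emb (MonoidAlgebra.of k G g) • (HO.x ^ i • e v)
      = ((χ g : kˣ) : k) ^ i • (HO.x ^ i • e (ρ g v)) := by
  rw [act_g_xpow, ← hq.equivariant]

/-- H-linearity follows from commutation with the generators. -/
lemma hcomm_all (HO : HopfOre k G H χ) (φ : W →ₗ[k] W')
    (hg : ∀ (g : G) (w : W), φ (HO.emb (MonoidAlgebra.of k G g) • w)
        = HO.emb (MonoidAlgebra.of k G g) • φ w)
    (hx : ∀ w : W, φ (HO.x • w) = HO.x • φ w) :
    ∀ (h : H) (w : W), φ (h • w) = h • φ w := by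
  have hxp : ∀ (i : ℕ) (w : W), φ (HO.x ^ i • w) = HO.x ^ i • φ w := by
    intro i
    induction i with
    | zero => intro w; simp
    | succ n ih =>
        intro w
        rw [pow_succ, mul_smul, mul_smul, ih, hx]
  intro h w
  have hmem : h ∈ Submodule.span k
      (Set.range fun p : G × ℕ => HO.emb (MonoidAlgebra.of k G p.1) * HO.x ^ p.2) := by
    rw [HO.basis_span]; exact Submodule.mem_top
  induction hmem using Submodule.span_induction with
  | mem h hh =>
      obtain ⟨⟨g, i⟩, rfl⟩ := hh
      rw [mul_smul, mul_smul, hg, hxp]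
  | zero => simp
  | add a b _ _ ha hb => rw [add_smul, add_smul, map_add, ha, hb]
  | smul a x _ hx' => rw [smul_assoc, smul_assoc, map_smul, hx']

lemma findim_W (hq : IsStdQuot HO ρ e c d) [FiniteDimensional k V] :
    FiniteDimensional k W :=
  LinearEquiv.finiteDimensional (bequiv hq)

/-- the `k`-linear endomorphism given by the action of `h : H`. -/
def hsmulMap (h : H) (W : Type) [AddCommGroup W] [Module k W] [Module H W]
    [IsScalarTower k H W] : W →ₗ[k] W where
  toFun w := h • w
  map_add' := smul_add h
  map_smul' c w := by simp only [RingHom.id_apply]; exact hsmul_comm c h w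

lemma x_smul_injective {s r : ℕ} {α : k} (hα : α ≠ 0) (hr : 0 < r) (hs : 0 < s)
    (hq : IsStdQuot HO ρ e ((HO.x ^ s - algebraMap k H α) ^ r) d) :
    Function.Injective fun w : W => HO.x • w := by
  intro w w' hww
  simp only at hww
  suffices h : ∀ u : W, HO.x • u = 0 → u = 0 by
    have := h (w - w') (by rw [smul_sub, hww, sub_self])
    exact sub_eq_zero.mp this
  intro u hu
  have hpow : ∀ i : ℕ, 0 < i → HO.x ^ i • u = 0 := by
    intro i hi
    obtain ⟨j, rfl⟩ := Nat.exists_eq_succ_of_ne_zero hi.ne'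
    rw [pow_succ, mul_smul, hu, smul_zero]
  have h0 := rel_overflow hq u
  rw [hpow (s * r) (by positivity)] at h0
  rw [Finset.sum_eq_single 0 (fun i _ hi => by
      rw [hpow (s * i) (by positivity), smul_zero]) (fun h => absurd (Finset.mem_range.mpr hr) h)]
    at h0
  rw [mul_zero, pow_zero, one_smul, Nat.sub_zero, Nat.choose_zero_right, Nat.cast_one,
    mul_one] at h0
  have : (-((-α) ^ r) : k) ≠ 0 := by
    simp only [ne_eq, neg_eq_zero, pow_eq_zero_iff hr.ne', neg_eq_zero]
    exact hα
  exact (smul_eq_zero.mp h0.symm).resolve_left this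

lemma xpow_smul_bijective {s r : ℕ} {α : k} (hα : α ≠ 0) (hr : 0 < r) (hs : 0 < s)
    [FiniteDimensional k V]
    (hq : IsStdQuot HO ρ e ((HO.x ^ s - algebraMap k H α) ^ r) d) (n : ℕ) :
    Function.Bijective fun w : W => HO.x ^ n • w := by
  haveI := findim_W hq
  have h1 : Function.Bijective fun w : W => HO.x • w := by
    have := x_smul_injective hα hr hs hq
    have h2 : Function.Injective (hsmulMap (k := k) HO.x W) := this
    exact ⟨this, LinearMap.injective_iff_surjective.mp h2⟩
  induction n with
  | zero => simp only [pow_zero, one_smul]; exact Function.bijective_id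
  | succ m ih =>
      have : (fun w : W => HO.x ^ (m + 1) • w)
          = (fun w : W => HO.x ^ m • w) ∘ fun w : W => HO.x • w := by
        funext w; simp [pow_succ, mul_smul]
      rw [this]
      exact ih.comp h1

end Aux3
section Aux4

variable {k G H : Type} [Field k] [Group G] [Ring H] [Algebra k H] {χ : G →* kˣ}
variable {V W : Type} [AddCommGroup V] [Module k V]
  [AddCommGroup W] [Module k W] [Module H W] [IsScalarTower k H W]
variable {ρ : Representation k G V} {e : V →ₗ[k] W} {c : H} {d : ℕ} {HO : HopfOre k G H χ}

lemma strided_sum_eq (hq : IsStdQuot HO ρ e c d) (a : ℕ → k) {s m : ℕ} (hs : 0 < s)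
    (hm : s * m < d) (v : V) :
    ∑ i ∈ Finset.range (m + 1), a i • (HO.x ^ (s * i) • e v)
      = bequiv hq (fun j : Fin d =>
          if s ∣ (j : ℕ) ∧ (j : ℕ) ≤ s * m then a ((j : ℕ) / s) • v else 0) := by
  rw [bequiv_apply]
  have hterm : ∀ j : Fin d,
      HO.x ^ (j : ℕ) • e (if s ∣ (j : ℕ) ∧ (j : ℕ) ≤ s * m then a ((j : ℕ) / s) • v else 0)
        = if s ∣ (j : ℕ) ∧ (j : ℕ) ≤ s * m then a ((j : ℕ) / s) • (HO.x ^ (j : ℕ) • e v)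
          else 0 := by
    intro j
    by_cases hj : s ∣ (j : ℕ) ∧ (j : ℕ) ≤ s * m
    · rw [if_pos hj, if_pos hj, map_smul, hsmul_comm]
    · rw [if_neg hj, if_neg hj, map_zero, smul_zero]
  rw [Finset.sum_congr rfl fun j _ => hterm j]
  rw [Fin.sum_univ_eq_sum_range
    (fun j => if s ∣ j ∧ j ≤ s * m then a (j / s) • (HO.x ^ j • e v) else 0) d]
  rw [← Finset.sum_filter]
  have hset : (Finset.range d).filter (fun j => s ∣ j ∧ j ≤ s * m)
      = (Finset.range (m + 1)).image (fun i => s * i) := by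
    ext j
    simp only [Finset.mem_filter, Finset.mem_range, Finset.mem_image]
    constructor
    · rintro ⟨hjd, ⟨i, rfl⟩, hjm⟩
      exact ⟨i, by
        constructor
        · have := Nat.le_of_mul_le_mul_left (by omega : s * i ≤ s * m) hs
          omega
        · ring⟩
    · rintro ⟨i, him, rfl⟩
      have h1 : s * i ≤ s * m := Nat.mul_le_mul_left s (by omega)
      exact ⟨by omega, ⟨i, by ring⟩, h1⟩
  rw [hset, Finset.sum_image (fun i _ i' _ h => by
    exact Nat.eq_of_mul_eq_mul_left hs h)]
  refine (Finset.sum_congr rfl fun i _ => ?_).symm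
  rw [Nat.mul_div_cancel_left i hs]

lemma strided_sum_ne_zero (hq : IsStdQuot HO ρ e c d) (a : ℕ → k) {s m : ℕ} (hs : 0 < s)
    (hm : s * m < d) {v : V} (hv : v ≠ 0) (ham : a m ≠ 0) :
    ∑ i ∈ Finset.range (m + 1), a i • (HO.x ^ (s * i) • e v) ≠ 0 := by
  rw [strided_sum_eq hq a hs hm v]
  intro h0
  have h1 : (fun j : Fin d =>
      if s ∣ (j : ℕ) ∧ (j : ℕ) ≤ s * m then a ((j : ℕ) / s) • v else 0) = 0 := by
    apply (bequiv hq).injective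
    rw [h0, map_zero]
  have h2 := congr_fun h1 ⟨s * m, hm⟩
  simp only [Pi.zero_apply] at h2
  rw [if_pos ⟨⟨m, rfl⟩, le_refl _⟩, Nat.mul_div_cancel_left m hs] at h2
  exact (smul_ne_zero ham hv) h2

lemma sub_pow_smul_e_ne_zero {s : ℕ} {α : k}
    (hq : IsStdQuot HO ρ e c d) (hs : 0 < s) {n : ℕ} (hn : s * n < d)
    {v : V} (hv : v ≠ 0) :
    ((HO.x ^ s - algebraMap k H α) ^ n) • e v ≠ 0 := by
  rw [sub_pow_expand, Finset.sum_smul]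
  have hterm : ∀ i, (((-α) ^ (n - i) * (n.choose i : k)) • HO.x ^ (s * i)) • e v
      = ((-α) ^ (n - i) * (n.choose i : k)) • (HO.x ^ (s * i) • e v) := fun i =>
    smul_assoc _ _ _
  rw [Finset.sum_congr rfl fun i _ => hterm i]
  exact strided_sum_ne_zero hq _ hs hn hv (by simp)

end Aux4
section Aux5

variable {k G H : Type} [Field k] [Group G] [Ring H] [Algebra k H] {χ : G →* kˣ}
variable {V W : Type} [AddCommGroup V] [Module k V]
  [AddCommGroup W] [Module k W] [Module H W] [IsScalarTower k H W]
variable {HO : HopfOre k G H χ}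

lemma hsmulMap_mul (h h' : H) :
    hsmulMap (k := k) (h * h') W = (hsmulMap h W) ∘ₗ (hsmulMap h' W) := by
  ext w; exact mul_smul h h' w

lemma hsmulMap_pow (h : H) (n : ℕ) :
    (hsmulMap (k := k) h W) ^ n = hsmulMap (h ^ n) W := by
  induction n with
  | zero => ext w; simp [hsmulMap]
  | succ m ih => rw [pow_succ, pow_succ, hsmulMap_mul, ih]; rfl

lemma hsmulMap_sub (h h' : H) :
    hsmulMap (k := k) (h - h') W = hsmulMap h W - hsmulMap h' W := by
  ext w; exact sub_smul h h' w

end Aux5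
section Aux6

variable {k G H : Type} [Field k] [Group G] [Ring H] [Algebra k H] {χ : G →* kˣ}
variable {V V' W W' : Type} [AddCommGroup V] [Module k V] [AddCommGroup V'] [Module k V']
  [AddCommGroup W] [Module k W] [Module H W] [IsScalarTower k H W]
  [AddCommGroup W'] [Module k W'] [Module H W'] [IsScalarTower k H W']
variable {HO : HopfOre k G H χ}

lemma forward_params {ρ : Representation k G V} {ρ' : Representation k G V'}
    {e : V →ₗ[k] W} {e' : V' →ₗ[k] W'}
    {s r t : ℕ} {α β : k} (hs : 0 < s) (hr : 0 < r) (ht : 0 < t)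
    (hVn : Nontrivial V) (hV'n : Nontrivial V')
    (hW : IsStdQuot HO ρ e ((HO.x ^ s - algebraMap k H α) ^ r) (r * s))
    (hW' : IsStdQuot HO ρ' e' ((HO.x ^ s - algebraMap k H β) ^ t) (t * s))
    (φ : W ≃ₗ[H] W') : r = t ∧ α = β := by
  obtain ⟨v0, hv0⟩ := exists_ne (0 : V)
  obtain ⟨v0', hv0'⟩ := exists_ne (0 : V')
  have hd : 0 < r * s := by positivity
  have hd' : 0 < t * s := by positivity
  have he0 : e v0 ≠ 0 := fun h => hv0 (e_injective hW hd (by rw [h, map_zero]))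
  -- pulled-back annihilators
  have annW : ∀ w : W, ((HO.x ^ s - algebraMap k H β) ^ t) • w = 0 := by
    intro w
    have h1 := hW'.ann (φ w)
    rw [← map_smul φ] at h1
    exact (LinearEquiv.map_eq_zero_iff φ).mp h1
  have annW' : ∀ w' : W', ((HO.x ^ s - algebraMap k H α) ^ r) • w' = 0 := by
    intro w'
    have h1 := hW.ann (φ.symm w')
    rw [← map_smul φ.symm] at h1
    exact (LinearEquiv.map_eq_zero_iff φ.symm).mp h1
  -- first: α = β
  have hαβ : α = β := by
    set N1 := hsmulMap (k := k) (HO.x ^ s - algebraMap k H α) W with hN1def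
    set N2 := hsmulMap (k := k) (HO.x ^ s - algebraMap k H β) W with hN2def
    have hN1 : IsNilpotent N1 := ⟨r, by
      rw [hN1def, hsmulMap_pow]; ext w; exact hW.ann w⟩
    have hN2 : IsNilpotent N2 := ⟨t, by
      rw [hN2def, hsmulMap_pow]; ext w; exact annW w⟩
    have cαx : Commute (algebraMap k H α) (HO.x ^ s) := Algebra.commutes α (HO.x ^ s)
    have cβx : Commute (algebraMap k H β) (HO.x ^ s) := Algebra.commutes β (HO.x ^ s)
    have cαβ : Commute (algebraMap k H α) (algebraMap k H β) :=
      (Algebra.commutes β (algebraMap k H α)).symm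
    have hcommH : Commute (HO.x ^ s - algebraMap k H α) (HO.x ^ s - algebraMap k H β) :=
      Commute.sub_left (Commute.sub_right (Commute.refl _) cβx.symm)
        (Commute.sub_right cαx cαβ)
    have hcomm : Commute N1 N2 := by
      show N1 * N2 = N2 * N1
      have e1 : N1 * N2 = hsmulMap (k := k)
          ((HO.x ^ s - algebraMap k H α) * (HO.x ^ s - algebraMap k H β)) W :=
        (hsmulMap_mul _ _).symm
      have e2 : N2 * N1 = hsmulMap (k := k)
          ((HO.x ^ s - algebraMap k H β) * (HO.x ^ s - algebraMap k H α)) W :=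
        (hsmulMap_mul _ _).symm
      rw [e1, e2, hcommH.eq]
    have hnil := Commute.isNilpotent_sub hcomm hN1 hN2
    have hdiff : N1 - N2 = hsmulMap (k := k) (algebraMap k H (β - α)) W := by
      rw [hN1def, hN2def, ← hsmulMap_sub]
      congr 1
      rw [map_sub]
      abel
    obtain ⟨m, hm⟩ := hnil
    rw [hdiff, hsmulMap_pow, ← map_pow] at hm
    have happ : ((β - α) ^ m) • e v0 = 0 := by
      have h2 := LinearMap.congr_fun hm (e v0)
      simp only [hsmulMap, LinearMap.coe_mk, AddHom.coe_mk, LinearMap.zero_apply] at h2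
      rwa [algebraMap_smul] at h2
    have hzero : ((β - α) ^ m : k) = 0 := by
      rcases smul_eq_zero.mp happ with h | h
      · exact h
      · exact absurd h he0
    rcases Nat.eq_zero_or_pos m with hm0 | hm0
    · rw [hm0, pow_zero] at hzero; exact absurd hzero one_ne_zero
    · have h3 := pow_eq_zero_iff hm0.ne' |>.mp hzero
      exact (sub_eq_zero.mp h3).symm
  subst hαβ
  -- now r = t
  constructor
  · by_contra hne
    rcases Nat.lt_or_ge r t with hlt | hge
    · -- r < t : contradiction on W' side: (x^s-α)^(t-1) • e' v0' ≠ 0 but r ≤ t-1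
      have hk : t - 1 = (t - 1 - r) + r := by omega
      have hz : ((HO.x ^ s - algebraMap k H α) ^ (t - 1)) • e' v0' = 0 := by
        rw [hk, pow_add, mul_smul, annW' (e' v0'), smul_zero]
      have hnz := sub_pow_smul_e_ne_zero (α := α) hW' hs
        (show s * (t - 1) < t * s by
          rw [mul_comm t s]; exact mul_lt_mul_of_pos_left (by omega) hs) hv0'
      exact hnz hz
    · have hlt : t < r := lt_of_le_of_ne hge (fun h => hne h.symm)
      have hk : r - 1 = (r - 1 - t) + t := by omega
      have hz : ((HO.x ^ s - algebraMap k H α) ^ (r - 1)) • e v0 = 0 := by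
        rw [hk, pow_add, mul_smul, annW (e v0), smul_zero]
      have hnz := sub_pow_smul_e_ne_zero (α := α) hW hs
        (show s * (r - 1) < r * s by
          rw [mul_comm r s]; exact mul_lt_mul_of_pos_left (by omega) hs) hv0
      exact hnz hz
  · rfl

end Aux6
section Aux7

variable {k G H : Type} [Field k] [Group G] [Ring H] [Algebra k H] {χ : G →* kˣ}
variable {V V' W W' : Type} [AddCommGroup V] [Module k V] [AddCommGroup V'] [Module k V']
  [AddCommGroup W] [Module k W] [Module H W] [IsScalarTower k H W]
  [AddCommGroup W'] [Module k W'] [Module H W'] [IsScalarTower k H W']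
variable {HO : HopfOre k G H χ}

lemma forward_twist {ρ : Representation k G V} {ρ' : Representation k G V'}
    {e : V →ₗ[k] W} {e' : V' →ₗ[k] W'} {c c' : H} {d d' : ℕ}
    (hρ : IsSimpleRep ρ) (hρ' : IsSimpleRep ρ') (hd : 0 < d)
    (hW : IsStdQuot HO ρ e c d) (hW' : IsStdQuot HO ρ' e' c' d')
    (φ : W ≃ₗ[H] W') : TwistEquiv χ ρ ρ' := by
  haveI : Nontrivial V := hρ.1
  have φsmul : ∀ (a : k) (w : W), φ (a • w) = a • φ w := fun a w => by
    rw [← algebraMap_smul H a w, map_smul, algebraMap_smul]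
  -- components of  φ ∘ e  in the basis of W'
  set Fv : V → (Fin d' → V') := fun v => (bequiv hW').symm (φ (e v)) with hFv
  have hrel : ∀ (g : G) (v : V) (j : Fin d'),
      Fv (ρ g v) j = ((χ g : kˣ) : k) ^ (j : ℕ) • ρ' g (Fv v j) := by
    intro g v j
    have key : φ (e (ρ g v))
        = bequiv hW' (fun j : Fin d' => ((χ g : kˣ) : k) ^ (j : ℕ) • ρ' g (Fv v j)) := by
      calc φ (e (ρ g v)) = φ (HO.emb (MonoidAlgebra.of k G g) • e v) := by
            rw [hW.equivariant]
        _ = HO.emb (MonoidAlgebra.of k G g) • φ (e v) := map_smul φ _ _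
        _ = HO.emb (MonoidAlgebra.of k G g) • bequiv hW' (Fv v) := by
            rw [hFv, LinearEquiv.apply_symm_apply]
        _ = ∑ j : Fin d', HO.emb (MonoidAlgebra.of k G g) • (HO.x ^ (j : ℕ) • e' (Fv v j)) := by
            rw [bequiv_apply, Finset.smul_sum]
        _ = ∑ j : Fin d', ((χ g : kˣ) : k) ^ (j : ℕ) • (HO.x ^ (j : ℕ) • e' (ρ' g (Fv v j))) :=
            Finset.sum_congr rfl fun j _ => act_g_e hW' g (j : ℕ) (Fv v j)
        _ = bequiv hW' (fun j : Fin d' => ((χ g : kˣ) : k) ^ (j : ℕ) • ρ' g (Fv v j)) := by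
            rw [bequiv_apply]
            exact Finset.sum_congr rfl fun j _ => by rw [map_smul, hsmul_comm]
    have h2 : Fv (ρ g v) = fun j : Fin d' => ((χ g : kˣ) : k) ^ (j : ℕ) • ρ' g (Fv v j) := by
      rw [hFv]
      simp only
      rw [key, LinearEquiv.symm_apply_apply]
    exact congr_fun h2 j
  -- find a nonzero component
  obtain ⟨v0, hv0⟩ := exists_ne (0 : V)
  have he0 : e v0 ≠ 0 := fun h => hv0 (e_injective hW hd (by rw [h, map_zero]))
  have hφ0 : φ (e v0) ≠ 0 := fun h => he0 ((LinearEquiv.map_eq_zero_iff φ).mp h)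
  have hFv0 : Fv v0 ≠ 0 := fun h => hφ0 (by
    have := (LinearEquiv.map_eq_zero_iff (bequiv hW').symm).mp h
    exact this)
  obtain ⟨j0, hj0⟩ := Function.ne_iff.mp hFv0
  -- the j0-component as a linear map
  set f0 : V →ₗ[k] V' :=
    { toFun := fun v => Fv v j0
      map_add' := fun v w => by
        show (bequiv hW').symm (φ (e (v + w))) j0
            = (bequiv hW').symm (φ (e v)) j0 + (bequiv hW').symm (φ (e w)) j0
        rw [map_add e, map_add φ, map_add (bequiv hW').symm]; rfl
      map_smul' := fun a v => by
        show (bequiv hW').symm (φ (e (a • v))) j0 = a • (bequiv hW').symm (φ (e v)) j0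
        rw [map_smul e, φsmul, map_smul (bequiv hW').symm]; rfl } with hf0
  have hf0rel : ∀ (g : G) (v : V), f0 (ρ g v) = ((χ g : kˣ) : k) ^ (j0 : ℕ) • ρ' g (f0 v) :=
    fun g v => hrel g v j0
  have hf0ne : f0 v0 ≠ 0 := hj0
  -- Schur argument
  have hker : LinearMap.ker f0 = ⊥ := by
    rcases hρ.2 (LinearMap.ker f0) (fun g v hv => by
      rw [LinearMap.mem_ker] at hv ⊢
      rw [hf0rel, hv, map_zero, smul_zero]) with h | h
    · exact h
    · exfalso; exact hf0ne (LinearMap.mem_ker.mp (h ▸ Submodule.mem_top))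
  have hrange : LinearMap.range f0 = ⊤ := by
    rcases hρ'.2 (LinearMap.range f0) (fun g w hw => by
      obtain ⟨v, rfl⟩ := hw
      have hne : (((χ g : kˣ) : k) ^ (j0 : ℕ)) ≠ 0 := pow_ne_zero _ (Units.ne_zero _)
      have : ρ' g (f0 v) = (((χ g : kˣ) : k) ^ (j0 : ℕ))⁻¹ • f0 (ρ g v) := by
        rw [hf0rel, smul_smul, inv_mul_cancel₀ hne, one_smul]
      rw [this]
      exact Submodule.smul_mem _ _ (LinearMap.mem_range_self f0 _)) with h | h
    · exfalso
      exact hf0ne (by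
        have : f0 v0 ∈ LinearMap.range f0 := LinearMap.mem_range_self f0 v0
        rw [h] at this
        exact (Submodule.mem_bot k).mp this)
    · exact h
  have hbij : Function.Bijective f0 :=
    ⟨LinearMap.ker_eq_bot.mp hker, LinearMap.range_eq_top.mp hrange⟩
  refine ⟨-(j0 : ℕ), LinearEquiv.ofBijective f0 hbij, fun g v => ?_⟩
  have hne : (((χ g : kˣ) : k) ^ (j0 : ℕ)) ≠ 0 := pow_ne_zero _ (Units.ne_zero _)
  have hval : ((χ g ^ (-(j0 : ℕ) : ℤ) : kˣ) : k) * ((χ g : kˣ) : k) ^ (j0 : ℕ) = 1 := by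
    rw [← Units.val_pow_eq_pow_val, ← Units.val_mul, ← zpow_natCast (χ g) (j0 : ℕ),
      ← zpow_add, neg_add_cancel, zpow_zero, Units.val_one]
  show ρ' g (f0 v) = ((χ g ^ (-(j0 : ℕ) : ℤ) : kˣ) : k) • f0 (ρ g v)
  rw [hf0rel, smul_smul, hval, one_smul]

end Aux7
section Aux8

variable {k G H : Type} [Field k] [Group G] [Ring H] [Algebra k H] {χ : G →* kˣ}
variable {V V' W W' : Type} [AddCommGroup V] [Module k V] [AddCommGroup V'] [Module k V']
  [AddCommGroup W] [Module k W] [Module H W] [IsScalarTower k H W]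
  [AddCommGroup W'] [Module k W'] [Module H W'] [IsScalarTower k H W']
variable {HO : HopfOre k G H χ}

lemma backward {ρ : Representation k G V} {ρ' : Representation k G V'}
    {e : V →ₗ[k] W} {e' : V' →ₗ[k] W'} {s r : ℕ} {α : k}
    [FiniteDimensional k V']
    (hs : 0 < s) (hr : 0 < r) (hα : α ≠ 0)
    (hχs : ∀ g : G, (χ g) ^ s = 1)
    (hW : IsStdQuot HO ρ e ((HO.x ^ s - algebraMap k H α) ^ r) (r * s))
    (hW' : IsStdQuot HO ρ' e' ((HO.x ^ s - algebraMap k H α) ^ r) (r * s))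
    (u : ℤ) (f : V ≃ₗ[k] V')
    (hf : ∀ (g : G) (v : V), ρ' g (f v) = ((χ g ^ u : kˣ) : k) • f (ρ g v)) :
    Nonempty (W ≃ₗ[H] W') := by
  set d := r * s with hd
  -- the shift exponent
  set j0 : ℕ := ((-u) % (s : ℤ)).toNat with hj0
  have hj0cast : ((j0 : ℤ)) = (-u) % (s : ℤ) :=
    Int.toNat_of_nonneg (Int.emod_nonneg _ (by exact_mod_cast hs.ne'))
  have hdvd : (s : ℤ) ∣ ((j0 : ℤ) + u) := by
    rw [hj0cast, Int.emod_def]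
    exact ⟨-((-u) / s), by ring⟩
  have hχ1 : ∀ g : G, (χ g) ^ ((j0 : ℤ) + u) = 1 := by
    intro g
    obtain ⟨m, hm⟩ := hdvd
    rw [hm, zpow_mul, zpow_natCast, hχs g, one_zpow]
  -- shifting by x^j0 is bijective on W'
  have hbij := xpow_smul_bijective hα hr hs hW' j0
  set Xe : W' ≃ₗ[k] W' := LinearEquiv.ofBijective (hsmulMap (HO.x ^ j0) W') hbij with hXedef
  have hXe : ∀ z : W', Xe z = HO.x ^ j0 • z := fun z => rfl
  set pim : (Fin d → V) ≃ₗ[k] (Fin d → V') :=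
    LinearEquiv.piCongrRight (fun _ : Fin d => f) with hpimdef
  have hpi : ∀ F : Fin d → V, pim F = fun j => f (F j) := fun F => rfl
  set φ : W ≃ₗ[k] W' := ((bequiv hW).symm.trans (pim.trans (bequiv hW'))).trans Xe with hφdef
  have φeval : ∀ F : Fin d → V,
      φ (bequiv hW F) = HO.x ^ j0 • bequiv hW' (fun j => f (F j)) := by
    intro F
    rw [hφdef]
    simp only [LinearEquiv.trans_apply, LinearEquiv.symm_apply_apply]
    rw [hpi, hXe]
  set w0 : V → W' := fun v => HO.x ^ j0 • e' (f v) with hw0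
  -- the monomial action property
  have Pn : ∀ n : ℕ, ∀ v : V, φ (HO.x ^ n • e v) = HO.x ^ n • w0 v := by
    intro n
    induction n using Nat.strong_induction_on with
    | _ n ih =>
      intro v
      by_cases hn : n < d
      · have h1 : HO.x ^ n • e v = bequiv hW (Pi.single (⟨n, hn⟩ : Fin d) v) :=
          e_pow_smul_eq hW ⟨n, hn⟩ v
        have h2 : (fun j => f ((Pi.single (⟨n, hn⟩ : Fin d) v : Fin d → V) j))
            = (Pi.single (⟨n, hn⟩ : Fin d) (f v) : Fin d → V') := by
          funext j
          by_cases hj : j = ⟨n, hn⟩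
          · subst hj; rw [Pi.single_eq_same, Pi.single_eq_same]
          · rw [Pi.single_eq_of_ne hj, Pi.single_eq_of_ne hj, map_zero]
        rw [h1, φeval, h2, ← e_pow_smul_eq hW' ⟨n, hn⟩ (f v)]
        rw [← mul_smul, ← pow_add, add_comm j0 n, pow_add, mul_smul]
      · push_neg at hn
        set m : ℕ := n - d with hm
        have h6 : s * r = d := by rw [hd, mul_comm]
        have hnm : n = m + s * r := by rw [h6, hm]; omega
        have hxn : HO.x ^ n • e v = HO.x ^ m • (HO.x ^ (s * r) • e v) := by
          rw [← mul_smul, ← pow_add, ← hnm]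
        rw [hxn, rel_overflow hW (e v), Finset.smul_sum, map_sum]
        have hterm : ∀ i ∈ Finset.range r,
            φ (HO.x ^ m • ((-((-α) ^ (r - i) * (r.choose i : k))) • (HO.x ^ (s * i) • e v)))
              = (-((-α) ^ (r - i) * (r.choose i : k))) • (HO.x ^ (m + s * i) • w0 v) := by
          intro i hi
          rw [hsmul_comm, map_smul]
          congr 1
          rw [← mul_smul, ← pow_add]
          have hlt : m + s * i < n := by
            have h3 : s * i < s * r :=
              mul_lt_mul_of_pos_left (Finset.mem_range.mp hi) hs
            omega
          exact ih _ hlt v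
        rw [Finset.sum_congr rfl hterm]
        have hrhs : HO.x ^ n • w0 v
            = ∑ i ∈ Finset.range r,
                (-((-α) ^ (r - i) * (r.choose i : k))) • (HO.x ^ (m + s * i) • w0 v) := by
          have hsplit : ∀ z : W', HO.x ^ n • z = HO.x ^ m • (HO.x ^ (s * r) • z) := fun z => by
            rw [← mul_smul, ← pow_add, ← hnm]
          rw [hsplit (w0 v), rel_overflow hW' (w0 v), Finset.smul_sum]
          refine Finset.sum_congr rfl fun i _ => ?_
          rw [hsmul_comm, ← mul_smul, ← pow_add]
        rw [hrhs]
  -- commutation with x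
  have hxc : ∀ w : W, φ (HO.x • w) = HO.x • φ w := by
    intro w
    obtain ⟨F, rfl⟩ := (bequiv hW).surjective w
    have hL : φ (HO.x • bequiv hW F) = ∑ j : Fin d, HO.x ^ ((j : ℕ) + 1) • w0 (F j) := by
      rw [bequiv_apply, Finset.smul_sum, map_sum]
      refine Finset.sum_congr rfl fun j _ => ?_
      rw [← mul_smul, ← pow_succ', Pn]
    have hφw : φ (bequiv hW F) = ∑ j : Fin d, HO.x ^ (j : ℕ) • w0 (F j) := by
      rw [φeval, bequiv_apply, Finset.smul_sum]
      refine Finset.sum_congr rfl fun j _ => ?_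
      rw [← mul_smul, ← pow_add, add_comm j0 (j : ℕ), pow_add, mul_smul]
    have hR : HO.x • φ (bequiv hW F) = ∑ j : Fin d, HO.x ^ ((j : ℕ) + 1) • w0 (F j) := by
      rw [hφw, Finset.smul_sum]
      refine Finset.sum_congr rfl fun j _ => ?_
      rw [← mul_smul, ← pow_succ']
    rw [hL, hR]
  -- commutation with the group
  have hgc : ∀ (g : G) (w : W),
      φ (HO.emb (MonoidAlgebra.of k G g) • w) = HO.emb (MonoidAlgebra.of k G g) • φ w := by
    intro g w
    obtain ⟨F, rfl⟩ := (bequiv hW).surjective w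
    set cg : k := ((χ g : kˣ) : k) with hcg
    have hcu : ((χ g ^ u : kˣ) : k) * cg ^ j0 = 1 := by
      rw [hcg, ← Units.val_pow_eq_pow_val, ← Units.val_mul, ← zpow_natCast (χ g) j0,
        ← zpow_add, add_comm u (j0 : ℤ), hχ1 g, Units.val_one]
    -- LHS
    have hL : φ (HO.emb (MonoidAlgebra.of k G g) • bequiv hW F)
        = HO.x ^ j0 • bequiv hW' (fun j => cg ^ (j : ℕ) • f (ρ g (F j))) := by
      have h1 : HO.emb (MonoidAlgebra.of k G g) • bequiv hW F
          = bequiv hW (fun j => cg ^ (j : ℕ) • ρ g (F j)) := by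
        rw [bequiv_apply, Finset.smul_sum, bequiv_apply]
        refine Finset.sum_congr rfl fun j _ => ?_
        rw [act_g_e hW, map_smul, hsmul_comm]
      have h5 : (fun j : Fin d => f ((cg ^ (j : ℕ)) • ρ g (F j)))
          = fun j : Fin d => cg ^ (j : ℕ) • f (ρ g (F j)) :=
        funext fun j => map_smul f _ _
      rw [h1, φeval, h5]
    -- RHS
    have hR : HO.emb (MonoidAlgebra.of k G g) • φ (bequiv hW F)
        = HO.x ^ j0 • bequiv hW' (fun j => cg ^ (j : ℕ) • f (ρ g (F j))) := by
      rw [φeval]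
      have h2 : HO.x ^ j0 • bequiv hW' (fun j => f (F j))
          = ∑ j : Fin d, HO.x ^ (j0 + (j : ℕ)) • e' (f (F j)) := by
        rw [bequiv_apply, Finset.smul_sum]
        exact Finset.sum_congr rfl fun j _ => by rw [← mul_smul, ← pow_add]
      rw [h2, Finset.smul_sum]
      have h3 : ∀ j : Fin d,
          HO.emb (MonoidAlgebra.of k G g) • (HO.x ^ (j0 + (j : ℕ)) • e' (f (F j)))
            = cg ^ (j : ℕ) • (HO.x ^ (j0 + (j : ℕ)) • e' (f (ρ g (F j)))) := by
        intro j
        have hsc : cg ^ (j0 + (j : ℕ)) * ((χ g ^ u : kˣ) : k) = cg ^ (j : ℕ) := by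
          rw [pow_add, mul_comm (cg ^ j0), mul_assoc, mul_comm (cg ^ j0), hcu, mul_one]
        rw [act_g_e hW', hf g, map_smul, hsmul_comm, smul_smul, hsc]
      rw [Finset.sum_congr rfl fun j _ => h3 j]
      rw [bequiv_apply, Finset.smul_sum]
      refine (Finset.sum_congr rfl fun j _ => ?_).symm
      rw [map_smul, hsmul_comm, hsmul_comm, ← mul_smul, ← pow_add]
    rw [hL, hR]
  -- assemble the H-linear equivalence
  have hall := hcomm_all HO (φ : W →ₗ[k] W') (fun g w => hgc g w) hxc
  exact ⟨{ toFun := φ, invFun := φ.symm, left_inv := φ.left_inv, right_inv := φ.right_inv,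
           map_add' := φ.map_add, map_smul' := fun h w => hall h w }⟩

end Aux8

/-- **Proposition 4.12.** Assume `kG` is finite-dimensional and semisimple and
`|q| = |χ| = s`.  Then `V_r(i,α) ≅ V_t(j,β)` as `H`-modules if and only if `r = t`,
`α = β` and `[i] = [j]`. -/
theorem stmt_14 {k G H : Type} [Field k] [IsAlgClosed k] [Group G] [Finite G]
    [Ring H] [Algebra k H]
    {χ : G →* kˣ} (a : G) (ha : a ∈ Subgroup.center G) (hχa : χ a ≠ 1)
    (hss : IsSemisimpleRing (MonoidAlgebra k G))
    (s : ℕ) (hs : 1 < s) (hχord : orderOf χ = s) (hqord : orderOf (χ a) = s)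
    (HO : HopfOre k G H χ)
    {V V' : Type} [AddCommGroup V] [Module k V] [FiniteDimensional k V]
    [AddCommGroup V'] [Module k V'] [FiniteDimensional k V']
    (ρ : Representation k G V) (hρ : IsSimpleRep ρ)
    (ρ' : Representation k G V') (hρ' : IsSimpleRep ρ')
    (α β : k) (hα : α ≠ 0) (hβ : β ≠ 0) (r t : ℕ) (hr : 0 < r) (ht : 0 < t)
    {W W' : Type} [AddCommGroup W] [Module k W] [Module H W] [IsScalarTower k H W]
    [AddCommGroup W'] [Module k W'] [Module H W'] [IsScalarTower k H W']
    (e : V →ₗ[k] W) (hW : IsStdQuot HO ρ e ((HO.x ^ s - algebraMap k H α) ^ r) (r * s))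
    (e' : V' →ₗ[k] W')
    (hW' : IsStdQuot HO ρ' e' ((HO.x ^ s - algebraMap k H β) ^ t) (t * s)) :
    Nonempty (W ≃ₗ[H] W') ↔ (r = t ∧ α = β ∧ TwistEquiv χ ρ ρ') := by
  have hs0 : 0 < s := by omega
  constructor
  · rintro ⟨φ⟩
    obtain ⟨hrt, hab⟩ := forward_params hs0 hr ht hρ.1 hρ'.1 hW hW' φ
    exact ⟨hrt, hab, forward_twist hρ hρ' (by positivity) hW hW' φ⟩
  · rintro ⟨hrt, hab, u, f, hf⟩
    subst hrt
    subst hab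
    have hχs : ∀ g : G, (χ g) ^ s = 1 := by
      intro g
      have h := pow_orderOf_eq_one χ
      rw [hχord] at h
      calc (χ g) ^ s = (χ ^ s) g := rfl
        _ = 1 := by rw [h]; rfl
    exact backward hs0 hr hα hχs hW hW' u f hf

end HopfOrePaper
end
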